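/- arXiv:0704.1349 — 4 statements merged into one kernel-verified Lean document; each statement's English description precedes it below -/
import Mathlib

section
/- Let h : ℝ → ℝ be increasing, convex, twice differentiable, with d(h′(s), ℕ) + h″(s) ≥ 1/4 for all s. Then for all compactly supported v ∈ L²(ℝ; D(H)) one has ‖(1+h″)^{1/2} e^{h(s)} v‖_{L²} ≲ ‖e^{h(s)}(∂_s − H)v‖_{L²}, where H is the Hermite operator. Key inequality after substituting w = e^h v: ‖(∂_s − H + h′(s))w‖²_{L²} = ‖∂_s w‖² + ‖(−H+h′)w‖² + ‖(h″)^{1/2} w‖² ≥ ∫ (d(h′(s),ℕ)² + h″(s)) ‖w(s)‖²_{L²} ds. -/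
open MeasureTheory

local notation "⟪" x ", " y "⟫" => @inner ℝ _ _ x y


set_option maxHeartbeats 1000000 in
lemma my_spec_pos {E : Type} [NormedAddCommGroup E] [InnerProductSpace ℝ E] [CompleteSpace E]
    (H : E →L[ℝ] E) (hsa : IsSelfAdjoint H)
    (hspec : ∀ r ∈ spectrum ℝ H, (0:ℝ) ≤ r) (x : E) : (0:ℝ) ≤ ⟪H x, x⟫ := by
  by_contra hneg
  push_neg at hneg
  have hsym := ContinuousLinearMap.isSelfAdjoint_iff_isSymmetric.mp hsa
  have hHsym : ∀ a b : E, ⟪H a, b⟫ = ⟪a, H b⟫ := fun a b => hsym a b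
  have hx0 : x ≠ 0 := by rintro rfl; simp at hneg
  have hxn : (0:ℝ) < ‖x‖ := norm_pos_iff.mpr hx0
  set y0 : E := ‖x‖⁻¹ • x with hy0def
  have hy0 : ‖y0‖ = 1 := by
    simp [hy0def, norm_smul, abs_of_pos (inv_pos.mpr hxn), inv_mul_cancel₀ hxn.ne']
  have hy0neg : ⟪H y0, y0⟫ < 0 := by
    have h : ⟪H y0, y0⟫ = ‖x‖⁻¹ * (‖x‖⁻¹ * ⟪H x, x⟫) := by
      simp [hy0def, ContinuousLinearMap.map_smul, inner_smul_left, inner_smul_right]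
    rw [h]
    have h1 : 0 < ‖x‖⁻¹ := inv_pos.mpr hxn
    nlinarith [mul_pos h1 h1]
  set S : Set ℝ := (fun y => ⟪H y, y⟫) '' {y : E | ‖y‖ = 1} with hSdef
  have hSne : S.Nonempty := ⟨_, ⟨y0, hy0, rfl⟩⟩
  have hSbd : BddBelow S := by
    refine ⟨-‖H‖, ?_⟩
    rintro r ⟨y, hy, rfl⟩
    have h1 : |⟪H y, y⟫| ≤ ‖H y‖ * ‖y‖ := abs_real_inner_le_norm _ _
    have h2 : ‖H y‖ ≤ ‖H‖ * ‖y‖ := H.le_opNorm y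
    simp only [Set.mem_setOf_eq] at hy
    rw [hy] at h1 h2
    simp only [mul_one] at h1 h2
    have := abs_le.mp h1
    linarith
  set m : ℝ := sInf S with hmdef
  have hmle : m ≤ ⟪H y0, y0⟫ := csInf_le hSbd ⟨y0, hy0, rfl⟩
  have hmneg : m < 0 := lt_of_le_of_lt hmle hy0neg
  have hmnot : m ∉ spectrum ℝ H := fun hmem => absurd (hspec m hmem) (not_le.mpr hmneg)
  have hunit : IsUnit ((algebraMap ℝ (E →L[ℝ] E)) m - H) := spectrum.notMem_iff.mp hmnot
  obtain ⟨u, hu⟩ := hunit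
  set Pc : E →L[ℝ] E := H - (algebraMap ℝ (E →L[ℝ] E)) m with hPcdef
  have hPcapp : ∀ z : E, Pc z = H z - m • z := by
    intro z
    simp [hPcdef, Algebra.algebraMap_eq_smul_one]
  set c : ℝ := ‖(↑u⁻¹ : E →L[ℝ] E)‖ with hcdef
  have hbb : ∀ z : E, ‖z‖ ≤ c * ‖Pc z‖ := by
    intro z
    have h1 : (↑u⁻¹ * ↑u : E →L[ℝ] E) = 1 := u.inv_mul
    have h2 : (↑u⁻¹ : E →L[ℝ] E) ((↑u : E →L[ℝ] E) z) = z := by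
      rw [← ContinuousLinearMap.mul_apply, h1, ContinuousLinearMap.one_apply]
    have h4 : (↑u : E →L[ℝ] E) z = -(Pc z) := by
      rw [hu, hPcdef]; simp
    calc ‖z‖ = ‖(↑u⁻¹ : E →L[ℝ] E) ((↑u : E →L[ℝ] E) z)‖ := by rw [h2]
      _ ≤ c * ‖(↑u : E →L[ℝ] E) z‖ := ContinuousLinearMap.le_opNorm _ _
      _ = c * ‖Pc z‖ := by rw [h4, norm_neg]
  have hc : 0 < c := by
    have h1 := hbb y0
    rw [hy0] at h1
    nlinarith [norm_nonneg (Pc y0)]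
  have hpos : ∀ z : E, 0 ≤ ⟪Pc z, z⟫ := by
    intro z
    rcases eq_or_ne z 0 with rfl | hz
    · simp
    · have hzn : (0:ℝ) < ‖z‖ := norm_pos_iff.mpr hz
      have hmz : m ≤ ⟪H (‖z‖⁻¹ • z), ‖z‖⁻¹ • z⟫ := by
        refine csInf_le hSbd ⟨‖z‖⁻¹ • z, ?_, rfl⟩
        simp [norm_smul, abs_of_pos (inv_pos.mpr hzn), inv_mul_cancel₀ hzn.ne']
      have hexp : ⟪H (‖z‖⁻¹ • z), ‖z‖⁻¹ • z⟫ = ‖z‖⁻¹ * (‖z‖⁻¹ * ⟪H z, z⟫) := by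
        simp [ContinuousLinearMap.map_smul, inner_smul_left, inner_smul_right]
      rw [hexp] at hmz
      have h4 := mul_le_mul_of_nonneg_right hmz (mul_nonneg hzn.le hzn.le)
      have h5 : (‖z‖⁻¹ * (‖z‖⁻¹ * ⟪H z, z⟫)) * (‖z‖ * ‖z‖) = ⟪H z, z⟫ := by
        field_simp
      rw [h5] at h4
      have hinner : ⟪Pc z, z⟫ = ⟪H z, z⟫ - m * ⟪z, z⟫ := by
        rw [hPcapp, inner_sub_left, real_inner_smul_left]
      rw [hinner, real_inner_self_eq_norm_sq]
      nlinarith [h4]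
  have hPsym : ∀ a b : E, ⟪Pc a, b⟫ = ⟪a, Pc b⟫ := by
    intro a b
    rw [hPcapp, hPcapp, inner_sub_left, inner_sub_right, hHsym a b,
      real_inner_smul_left, real_inner_smul_right]
  have hCS : ∀ z : E, ‖Pc z‖ ^ 2 * ‖Pc z‖ ^ 2 ≤ ⟪Pc (Pc z), Pc z⟫ * ⟪Pc z, z⟫ := by
    intro z
    have hquad : ∀ t : ℝ, 0 ≤ ⟪Pc (Pc z), Pc z⟫ * (t * t) + (2 * ‖Pc z‖ ^ 2) * t + ⟪Pc z, z⟫ := by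
      intro t
      have h0 := hpos (z + t • Pc z)
      have hlin : Pc (z + t • Pc z) = Pc z + t • Pc (Pc z) := by
        rw [map_add, ContinuousLinearMap.map_smul]
      rw [hlin, inner_add_left, inner_add_right, inner_add_right,
        real_inner_smul_left, real_inner_smul_right, real_inner_smul_left,
        real_inner_smul_right] at h0
      have hsymm1 : ⟪Pc (Pc z), z⟫ = ⟪Pc z, Pc z⟫ := by
        rw [hPsym (Pc z) z, real_inner_comm]
      rw [hsymm1, real_inner_self_eq_norm_sq] at h0
      nlinarith [h0]
    have hd := discrim_le_zero hquad
    rw [discrim] at hd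
    nlinarith [hd]
  set N : ℝ := ‖Pc‖ with hNdef
  have hN : 0 ≤ N := norm_nonneg _
  have hkey : ∀ y : E, ‖y‖ = 1 → 1 / c ^ 2 ≤ N * ⟪Pc y, y⟫ := by
    intro y hy
    have h1 := hCS y
    have h2 : ⟪Pc (Pc y), Pc y⟫ ≤ N * ‖Pc y‖ ^ 2 := by
      calc ⟪Pc (Pc y), Pc y⟫ ≤ ‖Pc (Pc y)‖ * ‖Pc y‖ := real_inner_le_norm _ _
        _ ≤ (N * ‖Pc y‖) * ‖Pc y‖ := by
            have := Pc.le_opNorm (Pc y)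
            nlinarith [norm_nonneg (Pc y)]
        _ = N * ‖Pc y‖ ^ 2 := by ring
    have h3 : 1 ≤ c * ‖Pc y‖ := by have := hbb y; rwa [hy] at this
    have h4 : (0:ℝ) < ‖Pc y‖ := by nlinarith
    have h5 : 1 / c ≤ ‖Pc y‖ := by
      rw [div_le_iff₀ hc]; linarith
    have h6 : 0 ≤ ⟪Pc y, y⟫ := hpos y
    have h7 : ‖Pc y‖ ^ 2 * ‖Pc y‖ ^ 2 ≤ (N * ⟪Pc y, y⟫) * ‖Pc y‖ ^ 2 := by nlinarith
    have h4sq : (0:ℝ) < ‖Pc y‖ ^ 2 := by positivity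
    have h8 : ‖Pc y‖ ^ 2 ≤ N * ⟪Pc y, y⟫ := by nlinarith [h7, h4sq]
    have h9 : 1 / c ^ 2 ≤ ‖Pc y‖ ^ 2 := by
      have h0c : (0:ℝ) ≤ 1/c := by positivity
      have : (1/c) * (1/c) ≤ ‖Pc y‖ * ‖Pc y‖ := by nlinarith [h5, h0c]
      calc 1 / c ^ 2 = (1/c) * (1/c) := by ring
        _ ≤ ‖Pc y‖ * ‖Pc y‖ := this
        _ = ‖Pc y‖ ^ 2 := by ring
    linarith
  have hε : (0:ℝ) < 1 / (c^2 * (N + 1)) := by positivity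
  obtain ⟨r, ⟨y, hy, rfl⟩, hrlt⟩ := exists_lt_of_csInf_lt hSne
    (show sInf S < m + 1 / (c^2 * (N + 1)) by rw [← hmdef]; linarith)
  simp only [Set.mem_setOf_eq] at hy
  have hform : ⟪Pc y, y⟫ < 1 / (c^2 * (N + 1)) := by
    have h : ⟪Pc y, y⟫ = ⟪H y, y⟫ - m * ⟪y, y⟫ := by
      rw [hPcapp, inner_sub_left, real_inner_smul_left]
    rw [h, real_inner_self_eq_norm_sq, hy]
    simp only [one_pow, mul_one]
    linarith
  have hky := hkey y hy
  have hc2 : (0:ℝ) < c ^ 2 := by positivity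
  have h6 := hpos y
  have h10 : N * (1 / (c^2 * (N+1))) < 1 / c^2 := by
    have heq : N * (1 / (c^2 * (N+1))) = N / (c^2*(N+1)) := by ring
    rw [heq, div_lt_div_iff₀ (by positivity) hc2]
    nlinarith
  nlinarith [mul_le_mul_of_nonneg_left (le_of_lt hform) hN]


lemma my_lower {E : Type} [NormedAddCommGroup E] [InnerProductSpace ℝ E] [CompleteSpace E]
    (H : E →L[ℝ] E) (hsa : IsSelfAdjoint H)
    (hspec : spectrum ℝ H ⊆ Set.range (fun k : ℕ => (k : ℝ))) (c : ℝ) (hc : 0 ≤ c) (x : E) :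
    c ^ 2 * ‖x‖ ^ 2 ≤ ‖H x + c • x‖ ^ 2 := by
  have hpos : (0:ℝ) ≤ ⟪H x, x⟫ :=
    my_spec_pos H hsa (fun r hr => by
      obtain ⟨k, hk⟩ := hspec hr
      rw [← hk]; exact Nat.cast_nonneg k) x
  have hexp : ‖H x + c • x‖ ^ 2 = ‖H x‖ ^ 2 + 2 * (c * ⟪H x, x⟫) + c ^ 2 * ‖x‖ ^ 2 := by
    rw [norm_add_sq_real, real_inner_smul_right, norm_smul, Real.norm_eq_abs, abs_of_nonneg hc,
      mul_pow]
  nlinarith [sq_nonneg ‖H x‖]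

lemma my_scalar (a b d : ℝ) (ha : 0 ≤ a) (hb : 0 ≤ b) (hd0 : 0 ≤ d) (hda : d ≤ a)
    (h4 : 1/4 ≤ b + d) : 1 + b ≤ 72 * (a ^ 2 + b) := by
  rcases le_or_gt (1/8 : ℝ) b with hcase | hcase
  · nlinarith [sq_nonneg a]
  · have h8 : (1:ℝ)/8 ≤ d := by linarith
    nlinarith

set_option maxHeartbeats 1000000 in
/-- Weighted `L²` Carleman estimate for `∂_s − H` with weight `e^{h(s)}`: if `h` is
increasing, convex and twice differentiable with `d(h′(s),ℕ) + h″(s) ≥ 1/4`, then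
`‖(1+h″)^{1/2} e^{h} v‖_{L²} ≲ ‖e^{h}(∂_s − H)v‖_{L²}` (in squared form), uniformly
over Hilbert spaces and self-adjoint operators `H` with spectrum in `ℕ`. -/
theorem stmt_5 :
    ∃ C : ℝ, 0 < C ∧
      ∀ (E : Type) [NormedAddCommGroup E] [InnerProductSpace ℝ E] [CompleteSpace E]
        (H : E →L[ℝ] E), IsSelfAdjoint H →
        spectrum ℝ H ⊆ Set.range (fun k : ℕ => (k : ℝ)) →
        ∀ (h h' h'' : ℝ → ℝ),
          (∀ s, HasDerivAt h (h' s) s) →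
          (∀ s, HasDerivAt h' (h'' s) s) →
          Continuous h'' →
          (∀ s, 0 ≤ h' s) →
          (∀ s, 0 ≤ h'' s) →
          (∀ s, (1 : ℝ)/4 ≤ h'' s + ⨅ k : ℕ, |h' s - (k : ℝ)|) →
          ∀ (v v' : ℝ → E), (∀ s, HasDerivAt v (v' s) s) → Continuous v' →
            HasCompactSupport v →
            (∫ s : ℝ, (1 + h'' s) * ‖Real.exp (h s) • v s‖^2) ≤
              C * ∫ s : ℝ, ‖Real.exp (h s) • (v' s - H (v s))‖^2 := by
  refine ⟨72, by norm_num, ?_⟩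
  intro E _ _ _ H hsa hspec h h' h'' hh hh' hh''c hh'0 hh''0 hgap v v' hv hv'c hcv
  have hsym := ContinuousLinearMap.isSelfAdjoint_iff_isSymmetric.mp hsa
  have hHsym : ∀ a b : E, ⟪H a, b⟫ = ⟪a, H b⟫ := fun a b => hsym a b
  -- continuity of basic functions
  have hh'c : Continuous h' :=
    (Differentiable.continuous (fun s => (hh' s).differentiableAt))
  have hhc2 : Continuous h := Differentiable.continuous (fun s => (hh s).differentiableAt)
  have hvc : Continuous v := Differentiable.continuous (fun s => (hv s).differentiableAt)
  have hec : Continuous (fun s => Real.exp (h s)) := Real.continuous_exp.comp hhc2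
  -- definitions
  set w : ℝ → E := fun s => Real.exp (h s) • v s with hwdef
  set dw : ℝ → E := fun s => Real.exp (h s) • v' s + (Real.exp (h s) * h' s) • v s with hdwdef
  set Bf : ℝ → E := fun s => H (w s) + h' s • w s with hBdef
  set uf : ℝ → E := fun s => Real.exp (h s) • (v' s - H (v s)) with hudef
  have hw : ∀ s, HasDerivAt w (dw s) s := by
    intro s
    exact ((hh s).exp).smul (hv s)
  have hkey : ∀ s, uf s = dw s - Bf s := by
    intro s
    simp only [hudef, hwdef, hdwdef, hBdef, smul_sub, ContinuousLinearMap.map_smul, smul_smul]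
    module
  -- continuity of derived functions
  have hwc : Continuous w := hec.smul hvc
  have hdwc : Continuous dw := (hec.smul hv'c).add ((hec.mul hh'c).smul hvc)
  have hBc : Continuous Bf := (H.continuous.comp hwc).add (hh'c.smul hwc)
  have huc : Continuous uf := hec.smul (hv'c.sub (H.continuous.comp hvc))
  -- compact support setup
  have hv'd : v' = deriv v := funext fun s => ((hv s).deriv).symm
  have hcv' : HasCompactSupport v' := hv'd ▸ hcv.deriv
  set K : Set ℝ := tsupport v ∪ tsupport v' with hKdef
  have hK : IsCompact K := hcv.union hcv'
  have hvK : ∀ s ∉ K, v s = 0 := fun s hs =>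
    image_eq_zero_of_notMem_tsupport (fun hmem => hs (Or.inl hmem))
  have hv'K : ∀ s ∉ K, v' s = 0 := fun s hs =>
    image_eq_zero_of_notMem_tsupport (fun hmem => hs (Or.inr hmem))
  have hwK : ∀ s ∉ K, w s = 0 := fun s hs => by simp [hwdef, hvK s hs]
  have hdwK : ∀ s ∉ K, dw s = 0 := fun s hs => by simp [hdwdef, hvK s hs, hv'K s hs]
  have hBK : ∀ s ∉ K, Bf s = 0 := fun s hs => by simp [hBdef, hwK s hs]
  have hufK : ∀ s ∉ K, uf s = 0 := fun s hs => by simp [hudef, hvK s hs, hv'K s hs]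
  -- the scalar function φ and its derivative
  set φ : ℝ → ℝ := fun s => ⟪w s, H (w s)⟫ + h' s * ⟪w s, w s⟫ with hφdef
  set φ' : ℝ → ℝ := fun s => 2 * ⟪dw s, Bf s⟫ + h'' s * ⟪w s, w s⟫ with hφ'def
  have hφ : ∀ s, HasDerivAt φ (φ' s) s := by
    intro s
    have h1 : HasDerivAt (fun t => H (w t)) (H (dw s)) s :=
      H.hasFDerivAt.comp_hasDerivAt s (hw s)
    have h2 := (hw s).inner ℝ h1
    have h3 := (hw s).inner ℝ (hw s)
    have h4 := (hh' s).mul h3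
    have h5 := h2.add h4
    convert h5 using 1
    show 2 * ⟪dw s, H (w s) + h' s • w s⟫ + h'' s * ⟪w s, w s⟫ = _
    rw [inner_add_right, real_inner_smul_right]
    have e1 : ⟪w s, H (dw s)⟫ = ⟪dw s, H (w s)⟫ := by
      have c1 := hHsym (w s) (dw s)
      have c2 := real_inner_comm (H (w s)) (dw s)
      linarith
    have e2 : ⟪w s, dw s⟫ = ⟪dw s, w s⟫ := real_inner_comm _ _
    rw [e1, e2]; ring
    all_goals rfl
  have hφ'c : Continuous φ' :=
    ((continuous_const.mul (hdwc.inner hBc))).add (hh''c.mul (hwc.inner hwc))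
  have hφK : ∀ s ∉ K, φ s = 0 := fun s hs => by simp [hφdef, hwK s hs]
  have hφ'K : ∀ s ∉ K, φ' s = 0 := fun s hs => by simp [hφ'def, hwK s hs, hdwK s hs]
  have hφcs : HasCompactSupport φ := HasCompactSupport.intro hK hφK
  have hφ'cs : HasCompactSupport φ' := HasCompactSupport.intro hK hφ'K
  have hiφ' : Integrable φ' := hφ'c.integrable_of_hasCompactSupport hφ'cs
  have hderiv : deriv φ = φ' := funext fun s => (hφ s).deriv
  have hφ1 : ContDiff ℝ 1 φ := contDiff_one_iff_deriv.mpr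
    ⟨fun s => (hφ s).differentiableAt, hderiv ▸ hφ'c⟩
  have hint0 : (∫ s : ℝ, φ' s) = 0 := by
    have hIic := HasCompactSupport.integral_Iic_deriv_eq hφ1 hφcs 0
    have hIoi := HasCompactSupport.integral_Ioi_deriv_eq hφ1 hφcs 0
    rw [hderiv] at hIic hIoi
    rw [← intervalIntegral.integral_Iic_add_Ioi hiφ'.integrableOn hiφ'.integrableOn, hIic, hIoi]
    ring
  -- pointwise identity
  have hptw : ∀ s, ‖uf s‖^2 + φ' s = ‖dw s‖^2 + (‖Bf s‖^2 + h'' s * ‖w s‖^2) := by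
    intro s
    rw [hkey s, norm_sub_sq_real]
    simp only [hφ'def]
    rw [real_inner_self_eq_norm_sq]
    ring
  -- integrability of all the pieces
  have hiu : Integrable (fun s => ‖uf s‖^2) :=
    (huc.norm.pow 2).integrable_of_hasCompactSupport
      (HasCompactSupport.intro hK (fun s hs => by simp [hufK s hs]))
  have hidw : Integrable (fun s => ‖dw s‖^2) :=
    (hdwc.norm.pow 2).integrable_of_hasCompactSupport
      (HasCompactSupport.intro hK (fun s hs => by simp [hdwK s hs]))
  have hiB : Integrable (fun s => ‖Bf s‖^2) :=
    (hBc.norm.pow 2).integrable_of_hasCompactSupport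
      (HasCompactSupport.intro hK (fun s hs => by simp [hBK s hs]))
  have hi5 : Integrable (fun s => h'' s * ‖w s‖^2) :=
    (hh''c.mul (hwc.norm.pow 2)).integrable_of_hasCompactSupport
      (HasCompactSupport.intro hK (fun s hs => by simp [hwK s hs]))
  have hi1 : Integrable (fun s => (1 + h'' s) * ‖w s‖^2) :=
    ((continuous_const.add hh''c).mul (hwc.norm.pow 2)).integrable_of_hasCompactSupport
      (HasCompactSupport.intro hK (fun s hs => by simp [hwK s hs]))
  have hi7 : Integrable (fun s => (h' s)^2 * ‖w s‖^2) :=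
    ((hh'c.pow 2).mul (hwc.norm.pow 2)).integrable_of_hasCompactSupport
      (HasCompactSupport.intro hK (fun s hs => by simp [hwK s hs]))
  have hi8 : Integrable (fun s => 72 * ((h' s)^2 * ‖w s‖^2 + h'' s * ‖w s‖^2)) :=
    (hi7.add hi5).const_mul 72
  -- integral identity
  have hsum : (∫ s : ℝ, ‖uf s‖^2)
      = (∫ s : ℝ, ‖dw s‖^2) + ((∫ s : ℝ, ‖Bf s‖^2) + ∫ s : ℝ, h'' s * ‖w s‖^2) := by
    have h1 : (∫ s : ℝ, (‖uf s‖^2 + φ' s))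
        = ∫ s : ℝ, (‖dw s‖^2 + (‖Bf s‖^2 + h'' s * ‖w s‖^2)) := by
      congr 1
      funext s
      exact hptw s
    have hiB5 : Integrable (fun s : ℝ => ‖Bf s‖^2 + h'' s * ‖w s‖^2) := hiB.add hi5
    rw [integral_add hiu hiφ', hint0, add_zero,
      integral_add hidw hiB5, integral_add hiB hi5] at h1
    exact h1
  -- pointwise bounds
  have hptw1 : ∀ s, (1 + h'' s) * ‖w s‖^2 ≤ 72 * ((h' s)^2 * ‖w s‖^2 + h'' s * ‖w s‖^2) := by
    intro s
    have hbdd : BddBelow (Set.range fun k : ℕ => |h' s - (k:ℝ)|) := by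
      refine ⟨0, ?_⟩
      rintro r ⟨k, rfl⟩
      exact abs_nonneg _
    have hd0 : 0 ≤ ⨅ k : ℕ, |h' s - (k:ℝ)| := le_ciInf (fun k => abs_nonneg _)
    have hda : (⨅ k : ℕ, |h' s - (k:ℝ)|) ≤ h' s := by
      have := ciInf_le hbdd 0
      simpa [abs_of_nonneg (hh'0 s)] using this
    have hscal := my_scalar (h' s) (h'' s) (⨅ k : ℕ, |h' s - (k:ℝ)|) (hh'0 s) (hh''0 s)
      hd0 hda (hgap s)
    calc (1 + h'' s) * ‖w s‖^2 ≤ (72 * ((h' s)^2 + h'' s)) * ‖w s‖^2 :=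
          mul_le_mul_of_nonneg_right hscal (sq_nonneg _)
      _ = 72 * ((h' s)^2 * ‖w s‖^2 + h'' s * ‖w s‖^2) := by ring
  have hptw2 : ∀ s, (h' s)^2 * ‖w s‖^2 ≤ ‖Bf s‖^2 := by
    intro s
    exact my_lower H hsa hspec (h' s) (hh'0 s) (w s)
  -- main chain
  calc (∫ s : ℝ, (1 + h'' s) * ‖w s‖^2)
      ≤ ∫ s : ℝ, 72 * ((h' s)^2 * ‖w s‖^2 + h'' s * ‖w s‖^2) :=
        integral_mono hi1 hi8 hptw1
    _ = 72 * ((∫ s : ℝ, (h' s)^2 * ‖w s‖^2) + ∫ s : ℝ, h'' s * ‖w s‖^2) := by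
        rw [integral_const_mul, integral_add hi7 hi5]
    _ ≤ 72 * ((∫ s : ℝ, ‖Bf s‖^2) + ∫ s : ℝ, h'' s * ‖w s‖^2) := by
        have := integral_mono hi7 hiB hptw2
        nlinarith
    _ ≤ 72 * ∫ s : ℝ, ‖uf s‖^2 := by
        rw [hsum]
        have h0 : 0 ≤ ∫ s : ℝ, ‖dw s‖^2 := integral_nonneg (fun s => sq_nonneg _)
        nlinarith
end

section
/- Let (ε_i)_{i∈ℤ} be a positive, slowly varying (|ln ε_i − ln ε_{i+1}| ≤ 1/2), summable sequence and τ ≫ 1. Then there exists a convex C² function h : ℝ → ℝ with: (1) h′ ∈ [τ, 2τ]; (2) h″(s) + dist(h′(s), ℕ) > 1/4 for all s; (3) ε_i τ ≲ h″(s) ≲ ε_i τ + 1 for s ∈ [i, i+1]; (4) |h‴| ≲ h″. -/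
open Real Set

noncomputable section StmtAux

/-- positive part squared -/
def psq (u : ℝ) : ℝ := (max u 0)^2

lemma psq_nonneg (u : ℝ) : 0 ≤ psq u := sq_nonneg _

lemma psq_of_nonpos {u : ℝ} (h : u ≤ 0) : psq u = 0 := by
  simp [psq, max_eq_right h]

lemma psq_of_nonneg {u : ℝ} (h : 0 ≤ u) : psq u = u^2 := by
  simp [psq, max_eq_left h]

lemma psq_le_sq (u : ℝ) : psq u ≤ u^2 := by
  rcases le_total u 0 with h | h
  · rw [psq_of_nonpos h]; positivity
  · rw [psq_of_nonneg h]

lemma hasDerivAt_psq (u : ℝ) : HasDerivAt psq (2 * max u 0) u := by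
  rcases lt_trichotomy u 0 with h | h | h
  · have : psq =ᶠ[nhds u] fun _ => (0:ℝ) := by
      filter_upwards [Iio_mem_nhds h] with v hv
      exact psq_of_nonpos (le_of_lt hv)
    rw [max_eq_right h.le, mul_zero]
    exact (hasDerivAt_const u 0).congr_of_eventuallyEq this
  · subst h
    rw [max_self, mul_zero]
    rw [hasDerivAt_iff_isLittleO]
    rw [Asymptotics.isLittleO_iff]
    intro c hc
    filter_upwards [Metric.closedBall_mem_nhds (0:ℝ) hc] with v hv
    simp only [Metric.mem_closedBall, Real.dist_eq, sub_zero] at hv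
    have h1 : |psq v - psq 0 - (v - 0) • (0:ℝ)| = psq v := by
      have : psq (0:ℝ) = 0 := psq_of_nonpos le_rfl
      simp [this, abs_of_nonneg (psq_nonneg v)]
    rw [Real.norm_eq_abs, h1]
    have := psq_le_sq v
    have h2 : v^2 ≤ c * |v| := by
      rw [sq]
      rcases abs_cases v with ⟨he, _⟩ | ⟨he, _⟩
      · nlinarith [abs_nonneg v]
      · nlinarith [abs_nonneg v]
    simp only [Real.norm_eq_abs, sub_zero]
    exact le_trans (le_trans this h2) (by rfl)
  · have : psq =ᶠ[nhds u] fun v => v^2 := by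
      filter_upwards [Ioi_mem_nhds h] with v hv
      exact psq_of_nonneg (le_of_lt hv)
    rw [max_eq_left h.le]
    have h2 : HasDerivAt (fun v : ℝ => v^2) (2*u) u := by
      simpa using hasDerivAt_pow 2 u
    exact h2.congr_of_eventuallyEq this

/-- the basic bump `ρ(t) = (t(2-t))₊²` -/
def rho (t : ℝ) : ℝ := psq (t * (2 - t))

def rho' (t : ℝ) : ℝ := 2 * max (t * (2 - t)) 0 * (2 - 2 * t)

lemma hasDerivAt_rho (t : ℝ) : HasDerivAt rho (rho' t) t := by
  have h1 : HasDerivAt (fun v : ℝ => v * (2 - v)) (2 - 2*t) t := by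
    have := (hasDerivAt_id t).mul ((hasDerivAt_const t (2:ℝ)).sub (hasDerivAt_id t))
    exact this.congr_deriv (by simp only [Pi.sub_apply, id_eq]; ring)
  have := (hasDerivAt_psq (t * (2 - t))).comp t h1
  exact this

lemma rho_nonneg (t : ℝ) : 0 ≤ rho t := psq_nonneg _

lemma rho_le_one (t : ℝ) : rho t ≤ 1 := by
  have h1 : t * (2 - t) ≤ 1 := by nlinarith [sq_nonneg (t - 1)]
  have h2 : max (t * (2 - t)) 0 ≤ 1 := max_le h1 zero_le_one
  have h3 : (0:ℝ) ≤ max (t * (2 - t)) 0 := le_max_right _ _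
  simp only [rho, psq]
  nlinarith

lemma rho_eq_zero {t : ℝ} (h : t ≤ 0 ∨ 2 ≤ t) : rho t = 0 := by
  apply psq_of_nonpos
  rcases h with h | h
  · nlinarith
  · nlinarith

lemma rho'_eq_zero {t : ℝ} (h : t ≤ 0 ∨ 2 ≤ t) : rho' t = 0 := by
  have : t * (2 - t) ≤ 0 := by rcases h with h | h <;> nlinarith
  simp [rho', max_eq_right this]

lemma abs_rho'_le (t : ℝ) : |rho' t| ≤ 4 := by
  rcases le_or_gt (t * (2 - t)) 0 with h | h
  · simp [rho', max_eq_right h]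
  · have ht : 0 < t ∧ t < 2 := by
      constructor <;> nlinarith
    have h1 : max (t * (2 - t)) 0 ≤ 1 := by
      apply max_le _ zero_le_one; nlinarith [sq_nonneg (t - 1)]
    have h2 : |2 - 2*t| ≤ 2 := by
      rw [abs_le]; constructor <;> nlinarith [ht.1, ht.2]
    have h0 : (0:ℝ) ≤ max (t * (2 - t)) 0 := le_max_right _ _
    rw [rho', abs_mul, abs_mul]
    have : |(2:ℝ)| = 2 := by norm_num
    rw [this, abs_of_nonneg h0]
    nlinarith [abs_nonneg (2 - 2*t)]

lemma rho_add_rho {t : ℝ} (h0 : 0 ≤ t) (h1 : t ≤ 1) : 1/2 ≤ rho t + rho (t + 1) := by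
  have e1 : rho t = (t * (2 - t))^2 := psq_of_nonneg (by nlinarith)
  have e2 : rho (t+1) = ((t+1) * (2 - (t+1)))^2 := psq_of_nonneg (by nlinarith)
  rw [e1, e2]
  nlinarith [sq_nonneg (t*(1-t)), sq_nonneg (t - 1), sq_nonneg t, sq_nonneg (1 - t^2), sq_nonneg (t*(2-t)), sq_nonneg (2*t - 1)]

/-- FTC helper -/
lemma ftc {f : ℝ → ℝ} (hf : Continuous f) (x : ℝ) :
    HasDerivAt (fun t => ∫ u in (0:ℝ)..t, f u) (f x) x :=
  (hf.integral_hasStrictDerivAt 0 x).hasDerivAt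

lemma continuous_rho : Continuous rho :=
  continuous_iff_continuousAt.2 fun t => (hasDerivAt_rho t).continuousAt

/-- the primitive of ρ -/
def Rf (t : ℝ) : ℝ := ∫ u in (0:ℝ)..t, rho u

lemma hasDerivAt_Rf (t : ℝ) : HasDerivAt Rf (rho t) t := ftc continuous_rho t

lemma Rf_of_nonpos {t : ℝ} (h : t ≤ 0) : Rf t = 0 := by
  rw [Rf, ← neg_eq_zero, ← intervalIntegral.integral_symm]
  rw [intervalIntegral.integral_congr (g := fun _ => (0:ℝ)), intervalIntegral.integral_zero]
  intro u hu
  rw [uIcc_of_le h] at hu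
  exact rho_eq_zero (Or.inl hu.2)

lemma Rf_mono : Monotone Rf :=
  monotone_of_deriv_nonneg (fun x => (hasDerivAt_Rf x).differentiableAt)
    (fun x => by rw [(hasDerivAt_Rf x).deriv]; exact rho_nonneg x)

lemma Rf_of_ge_two {t : ℝ} (h : 2 ≤ t) : Rf t = Rf 2 := by
  have : Rf t - Rf 2 = ∫ u in (2:ℝ)..t, rho u := by
    rw [Rf, Rf, ← intervalIntegral.integral_add_adjacent_intervals
      (continuous_rho.intervalIntegrable 0 2) (continuous_rho.intervalIntegrable 2 t)]
    ring
  have h2 : (∫ u in (2:ℝ)..t, rho u) = 0 := by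
    rw [intervalIntegral.integral_congr (g := fun _ => (0:ℝ)), intervalIntegral.integral_zero]
    intro u hu
    rw [uIcc_of_le h] at hu
    exact rho_eq_zero (Or.inr hu.1)
  linarith
 
lemma Rf_nonneg (t : ℝ) : 0 ≤ Rf t := by
  rcases le_total t 0 with h | h
  · rw [Rf_of_nonpos h]
  · rw [← Rf_of_nonpos (le_refl 0)]; exact Rf_mono h

lemma Rf_le_two (t : ℝ) : Rf t ≤ 2 := by
  have h2 : Rf 2 ≤ 2 := by
    rw [Rf]
    calc (∫ u in (0:ℝ)..2, rho u) ≤ ∫ _ in (0:ℝ)..2, (1:ℝ) := by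
          apply intervalIntegral.integral_mono_on (by norm_num)
            (continuous_rho.intervalIntegrable 0 2)
            (intervalIntegrable_const)
          intro x _; exact rho_le_one x
      _ = 2 := by simp
  rcases le_total t 2 with h | h
  · exact le_trans (Rf_mono h) h2
  · rw [Rf_of_ge_two h]; exact h2

def gf (u : ℝ) : ℝ := 1 - 20 * max (-(19/20) - Real.cos (2*π*u)) 0

lemma continuous_gf : Continuous gf := by
  unfold gf; fun_prop

lemma gf_nonneg (u : ℝ) : 0 ≤ gf u := by
  have h1 : max (-(19/20) - Real.cos (2*π*u)) 0 ≤ 1/20 := by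
    apply max_le _ (by norm_num)
    nlinarith [Real.neg_one_le_cos (2*π*u)]
  simp only [gf]; linarith

lemma gf_le_one (u : ℝ) : gf u ≤ 1 := by
  have h1 : (0:ℝ) ≤ max (-(19/20) - Real.cos (2*π*u)) 0 := le_max_right _ _
  simp only [gf]; linarith

lemma gf_periodic : Function.Periodic gf 1 := by
  intro u
  have : 2*π*(u+1) = 2*π*u + (1:ℤ)*(2*π) := by push_cast; ring
  simp only [gf, this, Real.cos_add_int_mul_two_pi]

def Gf (y : ℝ) : ℝ := ∫ u in (0:ℝ)..y, gf u

lemma hasDerivAt_Gf (y : ℝ) : HasDerivAt Gf (gf y) y :=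
  (continuous_gf.integral_hasStrictDerivAt 0 y).hasDerivAt

lemma gf_small {u : ℝ} (h1 : 12/25 ≤ u) (h2 : u ≤ 13/25) : gf u ≤ 1/5 := by
  -- cos(2πu) ≤ -0.99
  have hπ : π ≤ 3.15 := by linarith [Real.pi_lt_d2]
  have hπ2 : 3 ≤ π := by linarith [Real.pi_gt_three]
  have hcos : Real.cos (2*π*u) ≤ -(99/100) := by
    have he : 2*π*u = (2*π*u - π) + π := by ring
    rw [he, Real.cos_add_pi]
    have hb : |2*π*u - π| ≤ 13/100 := by
      have : 2*π*u - π = 2*π*(u - 1/2) := by ring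
      rw [this, abs_mul]
      have h3 : |u - 1/2| ≤ 1/50 := by rw [abs_le]; constructor <;> linarith
      have h4 : |2*π| = 2*π := abs_of_nonneg (by positivity)
      rw [h4]
      nlinarith
    have := Real.one_sub_sq_div_two_le_cos (x := 2*π*u - π)
    have hsq : (2*π*u - π)^2 ≤ (13/100)^2 := by
      have := abs_nonneg (2*π*u - π)
      nlinarith [sq_abs (2*π*u - π)]
    nlinarith
  have : 1/25 ≤ max (-(19/20) - Real.cos (2*π*u)) 0 := by
    apply le_max_of_le_left; linarith
  simp only [gf]; linarith

lemma Gf_int : (∫ u in (0:ℝ)..1, gf u) ≤ 97/100 := by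
  have i1 : IntervalIntegrable gf MeasureTheory.volume 0 (12/25) := continuous_gf.intervalIntegrable _ _
  have i2 : IntervalIntegrable gf MeasureTheory.volume (12/25) (13/25) := continuous_gf.intervalIntegrable _ _
  have i3 : IntervalIntegrable gf MeasureTheory.volume (13/25) 1 := continuous_gf.intervalIntegrable _ _
  have e : (∫ u in (0:ℝ)..1, gf u) = (∫ u in (0:ℝ)..(12/25), gf u) + (∫ u in (12/25 : ℝ)..(13/25), gf u) + (∫ u in (13/25 : ℝ)..1, gf u) := by
    rw [← intervalIntegral.integral_add_adjacent_intervals i1 (i2.trans i3),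
        ← intervalIntegral.integral_add_adjacent_intervals i2 i3]
    ring
  have b1 : (∫ u in (0:ℝ)..(12/25), gf u) ≤ 12/25 := by
    calc (∫ u in (0:ℝ)..(12/25), gf u) ≤ ∫ _ in (0:ℝ)..(12/25), (1:ℝ) :=
        intervalIntegral.integral_mono_on (by norm_num) i1 intervalIntegrable_const
          (fun x _ => gf_le_one x)
      _ = 12/25 := by simp
  have b2 : (∫ u in (12/25 : ℝ)..(13/25), gf u) ≤ (1/5) * (1/25) := by
    calc (∫ u in (12/25:ℝ)..(13/25), gf u) ≤ ∫ _ in (12/25:ℝ)..(13/25), (1/5 : ℝ) :=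
        intervalIntegral.integral_mono_on (by norm_num) i2 intervalIntegrable_const
          (fun x hx => gf_small hx.1 hx.2)
      _ = (1/5) * (1/25) := by simp; norm_num
  have b3 : (∫ u in (13/25 : ℝ)..1, gf u) ≤ 12/25 := by
    calc (∫ u in (13/25:ℝ)..1, gf u) ≤ ∫ _ in (13/25:ℝ)..1, (1:ℝ) :=
        intervalIntegral.integral_mono_on (by norm_num) i3 intervalIntegrable_const
          (fun x _ => gf_le_one x)
      _ = 12/25 := by simp; norm_num
  rw [e]; linarith

lemma Gf_sub (y : ℝ) (Δ : ℝ) (hΔ : 0 ≤ Δ) : Gf (y + Δ) - Gf y ≤ (97/100) * Δ + 1 := by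
  have hint : ∀ a b : ℝ, Gf b - Gf a = ∫ u in a..b, gf u := by
    intro a b
    rw [Gf, Gf, ← intervalIntegral.integral_add_adjacent_intervals
      (continuous_gf.intervalIntegrable 0 a) (continuous_gf.intervalIntegrable a b)]
    ring
  set k : ℕ := ⌊Δ⌋₊ with hk
  have hk1 : (k:ℝ) ≤ Δ := Nat.floor_le hΔ
  have hk2 : Δ < k + 1 := Nat.lt_floor_add_one Δ
  have claim : ∀ m : ℕ, Gf (y + m) - Gf y = m * (∫ u in (0:ℝ)..1, gf u) := by
    intro m
    induction m with
    | zero => simp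
    | succ n ih =>
      have : Gf (y + (n+1):ℝ) - Gf (y + n) = ∫ u in (0:ℝ)..1, gf u := by
        rw [hint]
        have he : (y + ((n:ℝ)+1)) = (y + n) + 1 := by ring
        rw [he]
        rw [gf_periodic.intervalIntegral_add_eq (y + (n:ℝ)) 0]
        simp
      push_cast
      push_cast at ih this
      linarith
  have hIpos : (0:ℝ) ≤ ∫ u in (0:ℝ)..1, gf u := by
    apply intervalIntegral.integral_nonneg (by norm_num)
    intro u _; exact gf_nonneg u
  have hI := Gf_int
  have step1 : Gf (y + k) - Gf y ≤ (97/100) * k := by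
    rw [claim k]
    nlinarith [Nat.cast_nonneg (α := ℝ) k]
  have step2 : Gf (y + Δ) - Gf (y + k) ≤ Δ - k := by
    rw [hint]
    calc (∫ u in (y + (k:ℝ))..(y+Δ), gf u) ≤ ∫ _ in (y + (k:ℝ))..(y+Δ), (1:ℝ) :=
        intervalIntegral.integral_mono_on (by linarith) (continuous_gf.intervalIntegrable _ _)
          intervalIntegrable_const (fun x _ => gf_le_one x)
      _ = Δ - k := by simp
  nlinarith

/-- the spike function -/
def phi (u : ℝ) : ℝ := (1/10) * psq (19/20 + Real.cos (2*π*u))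

def phi' (u : ℝ) : ℝ :=
  (1/10) * (2 * max (19/20 + Real.cos (2*π*u)) 0 * (-(Real.sin (2*π*u)) * (2*π)))

lemma hasDerivAt_phi (u : ℝ) : HasDerivAt phi (phi' u) u := by
  have h0 : HasDerivAt (fun v : ℝ => 2*π*v) (2*π) u := by
    simpa using (hasDerivAt_id u).const_mul (2*π)
  have h1 : HasDerivAt (fun v : ℝ => 19/20 + Real.cos (2*π*v))
      (-(Real.sin (2*π*u)) * (2*π)) u := by
    exact ((Real.hasDerivAt_cos (2*π*u)).comp u h0).const_add _
  have h2 := ((hasDerivAt_psq (19/20 + Real.cos (2*π*u))).comp u h1).const_mul (1/10)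
  exact h2

lemma phi_nonneg (u : ℝ) : 0 ≤ phi u := by
  have := psq_nonneg (19/20 + Real.cos (2*π*u)); simp only [phi]; linarith

lemma phi_le (u : ℝ) : phi u ≤ 2/5 := by
  have h1 : max (19/20 + Real.cos (2*π*u)) 0 ≤ 39/20 :=
    max_le (by nlinarith [Real.cos_le_one (2*π*u)]) (by norm_num)
  have h0 : (0:ℝ) ≤ max (19/20 + Real.cos (2*π*u)) 0 := le_max_right _ _
  have : psq (19/20 + Real.cos (2*π*u)) ≤ (39/20)^2 := by
    simp only [psq]; nlinarith
  simp only [phi]; nlinarith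

lemma abs_phi'_le (u : ℝ) : |phi' u| ≤ 3 := by
  have hπ : π ≤ 3.15 := by linarith [Real.pi_lt_d2]
  have hπ0 : 0 < π := Real.pi_pos
  have h1 : max (19/20 + Real.cos (2*π*u)) 0 ≤ 39/20 :=
    max_le (by nlinarith [Real.cos_le_one (2*π*u)]) (by norm_num)
  have h0 : (0:ℝ) ≤ max (19/20 + Real.cos (2*π*u)) 0 := le_max_right _ _
  set m := max (19/20 + Real.cos (2*π*u)) 0 with hm
  set sv := -(Real.sin (2*π*u)) * (2*π) with hsv
  have hs1 : -(2*π) ≤ sv := by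
    rw [hsv]; nlinarith [Real.neg_one_le_sin (2*π*u), Real.sin_le_one (2*π*u)]
  have hs2 : sv ≤ 2*π := by
    rw [hsv]; nlinarith [Real.neg_one_le_sin (2*π*u), Real.sin_le_one (2*π*u)]
  have key1 : m * sv ≤ m * (2*π) := mul_le_mul_of_nonneg_left hs2 h0
  have key2 : m * (-(2*π)) ≤ m * sv := mul_le_mul_of_nonneg_left hs1 h0
  have key3 : m * (2*π) ≤ (39/20) * (2*π) := mul_le_mul_of_nonneg_right h1 (by positivity)
  have key4 : (39/20) * (-(2*π)) ≤ m * (-(2*π)) := by nlinarith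
  simp only [phi']
  rw [abs_le]
  constructor <;> nlinarith

lemma phi_gate {u b : ℝ} (hb : 0 ≤ b) : phi u ≤ gf u * (b + phi u) := by
  rcases le_or_gt (-(19/20) - Real.cos (2*π*u)) 0 with h | h
  · have : gf u = 1 := by simp [gf, max_eq_right h]
    rw [this, one_mul]; linarith [phi_nonneg u]
  · have : phi u = 0 := by
      simp only [phi]
      rw [psq_of_nonpos (by linarith)]
      ring
    rw [this, add_zero]
    exact mul_nonneg (gf_nonneg u) hb

lemma spec0 {e : ℝ} (h0 : 0 ≤ e) (h1 : e ≤ 1/2) :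
    1/4 < (1/10) * psq (19/20 + Real.cos (2*π*e)) + e := by
  have hπ : π ≤ 3.15 := by linarith [Real.pi_lt_d2]
  have hπ3 : 3 ≤ π := by linarith [Real.pi_gt_three]
  rcases lt_or_ge (1/4 : ℝ) e with h | h
  · have := psq_nonneg (19/20 + Real.cos (2*π*e)); linarith
  rcases le_or_gt (1/5 : ℝ) e with h5 | h5
  · -- cos(2πe) ≥ 0
    have hc : 0 ≤ Real.cos (2*π*e) := by
      apply Real.cos_nonneg_of_mem_Icc
      constructor
      · nlinarith
      · nlinarith
    have hx : (19/20 : ℝ) ≤ 19/20 + Real.cos (2*π*e) := by linarith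
    have : (19/20 : ℝ)^2 ≤ psq (19/20 + Real.cos (2*π*e)) := by
      rw [psq_of_nonneg (by linarith)]
      nlinarith
    nlinarith
  · -- e < 1/5 : use cos x ≥ 1 - x²/2
    have hc := Real.one_sub_sq_div_two_le_cos (x := 2*π*e)
    have hπsq : π^2 ≤ 10 := by nlinarith
    have hq : 39/20 - 20*e^2 ≤ 19/20 + Real.cos (2*π*e) := by
      nlinarith [mul_nonneg (by nlinarith : (0:ℝ) ≤ 10 - π^2) (sq_nonneg e)]
    have hqpos : (0:ℝ) < 39/20 - 20*e^2 := by nlinarith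
    have : (39/20 - 20*e^2)^2 ≤ psq (19/20 + Real.cos (2*π*e)) := by
      rw [psq_of_nonneg (by linarith)]
      nlinarith
    nlinarith [sq_nonneg e, sq_nonneg (e - 1/5), sq_nonneg (e^2 - 1/25),
      mul_nonneg h0 (sq_nonneg e), mul_nonneg (mul_nonneg h0 h0) (sq_nonneg e)]

lemma spec (y : ℝ) : 1/4 < phi y + min (Int.fract y) (1 - Int.fract y) := by
  set d := Int.fract y with hd
  have hd0 : 0 ≤ d := Int.fract_nonneg y
  have hd1 : d < 1 := Int.fract_lt_one y
  have hy : (⌊y⌋ : ℝ) + d = y := by rw [hd]; exact Int.floor_add_fract y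
  have hcos : Real.cos (2*π*y) = Real.cos (2*π*d) := by
    have : 2*π*y = 2*π*d + (⌊y⌋ : ℤ) * (2*π) := by
      push_cast
      linear_combination (2*π) * hy.symm
    rw [this, Real.cos_add_int_mul_two_pi]
  have hphi : phi y = (1/10) * psq (19/20 + Real.cos (2*π*d)) := by
    simp only [phi, hcos]
  rcases le_or_gt d (1/2) with h | h
  · rw [min_eq_left (by linarith)]
    rw [hphi]
    exact spec0 hd0 h
  · rw [min_eq_right (by linarith)]
    set e := 1 - d with he
    have hcos2 : Real.cos (2*π*d) = Real.cos (2*π*e) := by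
      have h1 : 2*π*d = -(2*π*e) + (1:ℤ) * (2*π) := by rw [he]; push_cast; ring
      rw [h1, Real.cos_add_int_mul_two_pi, Real.cos_neg]
    rw [hphi, hcos2]
    exact spec0 (by linarith) (by linarith)

lemma iInf_nat_ge {y : ℝ} (hy : 0 ≤ y) :
    min (Int.fract y) (1 - Int.fract y) ≤ ⨅ k : ℕ, |y - (k:ℝ)| := by
  apply le_ciInf
  intro k
  have hfl : (⌊y⌋ : ℝ) ≤ y := Int.floor_le y
  have hfl2 : y < (⌊y⌋ : ℝ) + 1 := Int.lt_floor_add_one y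
  have hfr : (⌊y⌋ : ℝ) + Int.fract y = y := Int.floor_add_fract y
  rcases le_or_gt ((k:ℤ)) ⌊y⌋ with h | h
  · have hk : (k:ℝ) ≤ (⌊y⌋:ℝ) := by exact_mod_cast h
    have h3 : y - (k:ℝ) ≤ |y - k| := le_abs_self _
    have h2 : min (Int.fract y) (1 - Int.fract y) ≤ Int.fract y := min_le_left _ _
    linarith
  · have hk : (⌊y⌋:ℝ) + 1 ≤ (k:ℝ) := by exact_mod_cast h
    have h3 : -(y - (k:ℝ)) ≤ |y - k| := neg_le_abs _
    have h2 : min (Int.fract y) (1 - Int.fract y) ≤ 1 - Int.fract y := min_le_right _ _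
    linarith

section Baseline

variable {ε : ℤ → ℝ}

lemma summand_summable (hsum : Summable ε) (hpos : ∀ i, 0 < ε i) {ψ : ℝ → ℝ} {M : ℝ}
    (hM : ∀ u, |ψ u| ≤ M) (s : ℝ) :
    Summable (fun i : ℤ => ε i * ψ (s - i)) := by
  apply Summable.of_norm_bounded (g := fun i => M * ε i) (hsum.mul_left M)
  intro i
  rw [Real.norm_eq_abs, abs_mul, abs_of_nonneg (hpos i).le]
  calc ε i * |ψ (s - i)| ≤ ε i * M := mul_le_mul_of_nonneg_left (hM _) (hpos i).le
    _ = M * ε i := mul_comm _ _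

lemma tsum_hasDerivAt (hsum : Summable ε) (hpos : ∀ i, 0 < ε i) {ψ ψ' : ℝ → ℝ} {κ M M' : ℝ}
    (hd : ∀ u, HasDerivAt ψ (ψ' u) u)
    (h0 : ∀ u, u ≤ 0 → ψ u = 0) (h2 : ∀ u, 2 ≤ u → ψ u = κ)
    (h'z : ∀ u, u ≤ 0 ∨ 2 ≤ u → ψ' u = 0)
    (hM : ∀ u, |ψ u| ≤ M) (hM' : ∀ u, |ψ' u| ≤ M') (s₀ : ℝ) :
    HasDerivAt (fun s => ∑' i : ℤ, ε i * ψ (s - i)) (∑' i : ℤ, ε i * ψ' (s₀ - i)) s₀ := by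
  set n := ⌊s₀⌋ with hn
  set J : Finset ℤ := Finset.Icc (n-2) (n+1) with hJ
  have hmem : ∀ i : ℤ, i ∉ J → (i ≤ n - 3 ∨ n + 2 ≤ i) := by
    intro i hi
    simp only [hJ, Finset.mem_Icc, not_and_or, not_le] at hi
    omega
  have hfl1 : (n:ℝ) ≤ s₀ := Int.floor_le s₀
  have hfl2 : s₀ < n + 1 := Int.lt_floor_add_one s₀
  have hfar : ∀ s : ℝ, |s - s₀| < 1/2 → ∀ i ∉ J, ψ (s - i) = ψ (s₀ - i) := by
    intro s hs i hi
    have habs := abs_lt.mp hs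
    rcases hmem i hi with h | h
    · have hc : (i:ℝ) ≤ (n:ℝ) - 3 := by exact_mod_cast h
      rw [h2 _ (by linarith), h2 _ (by linarith)]
    · have hc : (n:ℝ) + 2 ≤ i := by exact_mod_cast h
      rw [h0 _ (by linarith), h0 _ (by linarith)]
  have hz' : ∀ i ∉ J, ε i * ψ' (s₀ - i) = 0 := by
    intro i hi
    rcases hmem i hi with h | h
    · have hc : (i:ℝ) ≤ (n:ℝ) - 3 := by exact_mod_cast h
      rw [h'z _ (Or.inr (by linarith)), mul_zero]
    · have hc : (n:ℝ) + 2 ≤ i := by exact_mod_cast h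
      rw [h'z _ (Or.inl (by linarith)), mul_zero]
  have heq : (fun s => ∑' i : ℤ, ε i * ψ (s - i)) =ᶠ[nhds s₀]
      (fun s => (∑ i ∈ J, ε i * ψ (s - i)) + ∑' i : {j : ℤ // j ∉ J}, ε (i:ℤ) * ψ (s₀ - (i:ℤ))) := by
    filter_upwards [Metric.ball_mem_nhds s₀ (by norm_num : (0:ℝ) < 1/2)] with s hs
    rw [Metric.mem_ball, Real.dist_eq] at hs
    rw [← Summable.sum_add_tsum_compl (s := J) (summand_summable hsum hpos hM s)]
    congr 1
    apply tsum_congr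
    rintro ⟨i, hi⟩
    simp only
    rw [hfar s hs i hi]
  have hder : HasDerivAt
      (fun s => (∑ i ∈ J, ε i * ψ (s - i)) + ∑' i : {j : ℤ // j ∉ J}, ε (i:ℤ) * ψ (s₀ - (i:ℤ)))
      (∑ i ∈ J, ε i * ψ' (s₀ - i)) s₀ := by
    apply HasDerivAt.add_const
    apply HasDerivAt.fun_sum
    intro i _
    have hbase : HasDerivAt (fun s : ℝ => ψ (s - i)) (ψ' (s₀ - i)) s₀ := by
      have := (hd (s₀ - i)).comp s₀ ((hasDerivAt_id s₀).sub_const (i:ℝ))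
      exact this.congr_deriv (mul_one _)
    simpa [mul_comm] using hbase.const_mul (ε i)
  have h3 := hder.congr_of_eventuallyEq heq
  rwa [tsum_eq_sum (s := J) hz']

lemma tsum_eval {ψ : ℝ → ℝ} (hz : ∀ u, u ≤ 0 ∨ 2 ≤ u → ψ u = 0) (i : ℤ) (s : ℝ)
    (hs1 : (i:ℝ) ≤ s) (hs2 : s ≤ (i:ℝ) + 1) :
    ∑' j : ℤ, ε j * ψ (s - j) = ε (i-1) * ψ (s - i + 1) + ε i * ψ (s - i) := by
  rw [tsum_eq_sum (s := ({i-1, i} : Finset ℤ)) ?_]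
  · rw [Finset.sum_pair (by omega)]
    have : ((i:ℤ) - 1 : ℤ) = (i - 1 : ℤ) := rfl
    have hc : ((i - 1 : ℤ) : ℝ) = (i:ℝ) - 1 := by push_cast; ring
    rw [hc]
    ring_nf
  · intro j hj
    simp only [Finset.mem_insert, Finset.mem_singleton] at hj
    push_neg at hj
    have : j ≤ i - 2 ∨ i + 1 ≤ j := by omega
    rcases this with h | h
    · have hc : (j:ℝ) ≤ (i:ℝ) - 2 := by exact_mod_cast h
      rw [hz _ (Or.inr (by linarith)), mul_zero]
    · have hc : (i:ℝ) + 1 ≤ (j:ℝ) := by exact_mod_cast h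
      rw [hz _ (Or.inl (by linarith)), mul_zero]

end Baseline

section BDef

variable {ε : ℤ → ℝ} {a : ℝ}

def Bfun (ε : ℤ → ℝ) (a : ℝ) (s : ℝ) : ℝ := a * ∑' i : ℤ, ε i * rho (s - i)
def Bfun' (ε : ℤ → ℝ) (a : ℝ) (s : ℝ) : ℝ := a * ∑' i : ℤ, ε i * rho' (s - i)
def Afun (ε : ℤ → ℝ) (a : ℝ) (s : ℝ) : ℝ := a * ∑' i : ℤ, ε i * Rf (s - i)

lemma abs_rho_le (u : ℝ) : |rho u| ≤ 1 := by
  rw [abs_of_nonneg (rho_nonneg u)]; exact rho_le_one u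

lemma abs_Rf_le (u : ℝ) : |Rf u| ≤ 2 := by
  rw [abs_of_nonneg (Rf_nonneg u)]; exact Rf_le_two u

lemma rho_zero_out : ∀ u : ℝ, u ≤ 0 ∨ 2 ≤ u → rho u = 0 := fun _ h => rho_eq_zero h

lemma hasDerivAt_Afun (hsum : Summable ε) (hpos : ∀ i, 0 < ε i) (s : ℝ) :
    HasDerivAt (Afun ε a) (Bfun ε a s) s := by
  have := (tsum_hasDerivAt hsum hpos (ψ := Rf) (ψ' := rho) (κ := Rf 2) (M := 2) (M' := 1)
    hasDerivAt_Rf (fun u hu => Rf_of_nonpos hu) (fun u hu => Rf_of_ge_two hu)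
    rho_zero_out abs_Rf_le abs_rho_le s).const_mul a
  exact this

lemma hasDerivAt_Bfun (hsum : Summable ε) (hpos : ∀ i, 0 < ε i) (s : ℝ) :
    HasDerivAt (Bfun ε a) (Bfun' ε a s) s := by
  have := (tsum_hasDerivAt hsum hpos (ψ := rho) (ψ' := rho') (κ := 0) (M := 1) (M' := 4)
    hasDerivAt_rho (fun u hu => rho_eq_zero (Or.inl hu)) (fun u hu => rho_eq_zero (Or.inr hu))
    (fun _ h => rho'_eq_zero h) abs_rho_le abs_rho'_le s).const_mul a
  exact this

lemma Bfun_eval (i : ℤ) {s : ℝ} (hs1 : (i:ℝ) ≤ s) (hs2 : s ≤ (i:ℝ) + 1) :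
    Bfun ε a s = a * (ε (i-1) * rho (s - i + 1) + ε i * rho (s - i)) := by
  rw [Bfun, tsum_eval rho_zero_out i s hs1 hs2]

lemma Bfun'_eval (i : ℤ) {s : ℝ} (hs1 : (i:ℝ) ≤ s) (hs2 : s ≤ (i:ℝ) + 1) :
    Bfun' ε a s = a * (ε (i-1) * rho' (s - i + 1) + ε i * rho' (s - i)) := by
  rw [Bfun', tsum_eval (fun _ h => rho'_eq_zero h) i s hs1 hs2]

lemma eps_le_one (hsum : Summable ε) (hpos : ∀ i, 0 < ε i) (hle1 : (∑' i, ε i) ≤ 1) (i : ℤ) :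
    ε i ≤ 1 :=
  le_trans (Summable.le_tsum hsum i (fun j _ => (hpos j).le)) hle1

lemma eps_step (hpos : ∀ i, 0 < ε i)
    (hslow : ∀ i, |Real.log (ε i) - Real.log (ε (i+1))| ≤ 1/2) (i : ℤ) :
    ε (i+1) ≤ 2 * ε i ∧ ε i ≤ 2 * ε (i+1) := by
  have hexp : Real.exp (1/2) ≤ 2 := by
    nlinarith [Real.exp_one_lt_d9, Real.exp_pos (1/2 : ℝ),
      Real.exp_add (1/2 : ℝ) (1/2 : ℝ), Real.exp_pos (1:ℝ)]
  have h := abs_le.mp (hslow i)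
  constructor
  · have : ε (i+1) = Real.exp (Real.log (ε (i+1))) := (Real.exp_log (hpos _)).symm
    rw [this]
    calc Real.exp (Real.log (ε (i+1))) ≤ Real.exp (Real.log (ε i) + 1/2) :=
          Real.exp_le_exp.mpr (by linarith)
      _ = ε i * Real.exp (1/2) := by rw [Real.exp_add, Real.exp_log (hpos i)]
      _ ≤ 2 * ε i := by nlinarith [(hpos i), Real.exp_pos (1/2:ℝ)]
  · have : ε i = Real.exp (Real.log (ε i)) := (Real.exp_log (hpos _)).symm
    rw [this]
    calc Real.exp (Real.log (ε i)) ≤ Real.exp (Real.log (ε (i+1)) + 1/2) :=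
          Real.exp_le_exp.mpr (by linarith)
      _ = ε (i+1) * Real.exp (1/2) := by rw [Real.exp_add, Real.exp_log (hpos _)]
      _ ≤ 2 * ε (i+1) := by nlinarith [(hpos (i+1)), Real.exp_pos (1/2:ℝ)]

lemma eps_pred (hpos : ∀ i, 0 < ε i)
    (hslow : ∀ i, |Real.log (ε i) - Real.log (ε (i+1))| ≤ 1/2) (i : ℤ) :
    ε i ≤ 2 * ε (i-1) ∧ ε (i-1) ≤ 2 * ε i := by
  have := eps_step hpos hslow (i-1)
  rw [sub_add_cancel] at this
  exact ⟨this.1, this.2⟩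

lemma Bfun_lb (ha : 0 ≤ a) (hpos : ∀ i, 0 < ε i)
    (hslow : ∀ i, |Real.log (ε i) - Real.log (ε (i+1))| ≤ 1/2)
    (i : ℤ) {s : ℝ} (hs1 : (i:ℝ) ≤ s) (hs2 : s ≤ (i:ℝ) + 1) :
    a * (ε i / 4) ≤ Bfun ε a s := by
  rw [Bfun_eval i hs1 hs2]
  set t := s - (i:ℝ) with ht
  have ht0 : 0 ≤ t := by linarith
  have ht1 : t ≤ 1 := by linarith
  have hsum2 := rho_add_rho ht0 ht1
  have hp := (eps_pred hpos hslow i).1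
  have k1 : (ε i / 2) * rho (t+1) ≤ ε (i-1) * rho (t+1) :=
    mul_le_mul_of_nonneg_right (by linarith) (rho_nonneg _)
  have k2 : (ε i / 2) * rho t ≤ ε i * rho t :=
    mul_le_mul_of_nonneg_right (by linarith [hpos i]) (rho_nonneg _)
  have h2 : ε i / 4 ≤ ε (i-1) * rho (t+1) + ε i * rho t := by
    nlinarith [hpos i]
  exact mul_le_mul_of_nonneg_left h2 ha

lemma Bfun_ub (ha : 0 ≤ a) (hpos : ∀ i, 0 < ε i)
    (hslow : ∀ i, |Real.log (ε i) - Real.log (ε (i+1))| ≤ 1/2)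
    (i : ℤ) {s : ℝ} (hs1 : (i:ℝ) ≤ s) (hs2 : s ≤ (i:ℝ) + 1) :
    Bfun ε a s ≤ 3 * a * ε i := by
  rw [Bfun_eval i hs1 hs2]
  have hp := (eps_pred hpos hslow i).2
  have k1 : ε (i-1) * rho (s - i + 1) ≤ ε (i-1) := by
    nlinarith [hpos (i-1), rho_le_one (s - (i:ℝ) + 1), rho_nonneg (s - (i:ℝ) + 1)]
  have k2 : ε i * rho (s - i) ≤ ε i := by
    nlinarith [hpos i, rho_le_one (s - (i:ℝ)), rho_nonneg (s - (i:ℝ))]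
  calc a * (ε (i-1) * rho (s - i + 1) + ε i * rho (s - i)) ≤ a * (3 * ε i) :=
      mul_le_mul_of_nonneg_left (by linarith) ha
    _ = 3 * a * ε i := by ring

lemma Bfun_nonneg (ha : 0 ≤ a) (hpos : ∀ i, 0 < ε i)
    (hslow : ∀ i, |Real.log (ε i) - Real.log (ε (i+1))| ≤ 1/2) (s : ℝ) :
    0 ≤ Bfun ε a s := by
  have h1 : ((⌊s⌋ : ℤ):ℝ) ≤ s := Int.floor_le s
  have h2 : s ≤ ((⌊s⌋:ℤ):ℝ) + 1 := (Int.lt_floor_add_one s).le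
  calc (0:ℝ) ≤ a * (ε ⌊s⌋ / 4) := mul_nonneg ha (by linarith [hpos ⌊s⌋])
    _ ≤ _ := Bfun_lb ha hpos hslow ⌊s⌋ h1 h2

lemma Bfun_glob (ha : 0 ≤ a) (hsum : Summable ε) (hpos : ∀ i, 0 < ε i)
    (hslow : ∀ i, |Real.log (ε i) - Real.log (ε (i+1))| ≤ 1/2)
    (hle1 : (∑' i, ε i) ≤ 1) (s : ℝ) :
    Bfun ε a s ≤ 3 * a := by
  have h1 : ((⌊s⌋ : ℤ):ℝ) ≤ s := Int.floor_le s
  have h2 : s ≤ ((⌊s⌋:ℤ):ℝ) + 1 := (Int.lt_floor_add_one s).le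
  calc Bfun ε a s ≤ 3 * a * ε ⌊s⌋ := Bfun_ub ha hpos hslow ⌊s⌋ h1 h2
    _ ≤ 3 * a := by nlinarith [eps_le_one hsum hpos hle1 ⌊s⌋]

lemma Bfun'_bound (ha : 0 ≤ a) (hpos : ∀ i, 0 < ε i)
    (hslow : ∀ i, |Real.log (ε i) - Real.log (ε (i+1))| ≤ 1/2)
    (i : ℤ) {s : ℝ} (hs1 : (i:ℝ) ≤ s) (hs2 : s ≤ (i:ℝ) + 1) :
    |Bfun' ε a s| ≤ 12 * a * ε i := by
  rw [Bfun'_eval i hs1 hs2, abs_mul, abs_of_nonneg ha]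
  have hp := (eps_pred hpos hslow i).2
  have b : |ε (i-1) * rho' (s - i + 1) + ε i * rho' (s - i)| ≤ 12 * ε i := by
    calc |ε (i-1) * rho' (s - i + 1) + ε i * rho' (s - i)|
        ≤ |ε (i-1) * rho' (s - i + 1)| + |ε i * rho' (s - i)| := abs_add_le _ _
      _ ≤ ε (i-1) * 4 + ε i * 4 := by
          apply add_le_add
          · rw [abs_mul, abs_of_nonneg (hpos _).le]
            exact mul_le_mul_of_nonneg_left (abs_rho'_le _) (hpos _).le
          · rw [abs_mul, abs_of_nonneg (hpos _).le]
            exact mul_le_mul_of_nonneg_left (abs_rho'_le _) (hpos _).le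
      _ ≤ 12 * ε i := by nlinarith [hpos i]
  calc a * |ε (i-1) * rho' (s - i + 1) + ε i * rho' (s - i)| ≤ a * (12 * ε i) :=
      mul_le_mul_of_nonneg_left b ha
    _ = 12 * a * ε i := by ring

lemma Afun_nonneg (ha : 0 ≤ a) (hsum : Summable ε) (hpos : ∀ i, 0 < ε i) (s : ℝ) :
    0 ≤ Afun ε a s := by
  apply mul_nonneg ha
  apply tsum_nonneg
  intro i
  exact mul_nonneg (hpos i).le (Rf_nonneg _)

lemma Afun_le (ha : 0 ≤ a) (hsum : Summable ε) (hpos : ∀ i, 0 < ε i)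
    (hle1 : (∑' i, ε i) ≤ 1) (s : ℝ) :
    Afun ε a s ≤ 2 * a := by
  have h1 : (∑' i : ℤ, ε i * Rf (s - i)) ≤ ∑' i : ℤ, 2 * ε i := by
    apply Summable.tsum_le_tsum _ (summand_summable hsum hpos abs_Rf_le s) (hsum.mul_left 2)
    intro i
    have := Rf_le_two (s - i)
    nlinarith [hpos i, Rf_nonneg (s - (i:ℝ))]
  have h2 : (∑' i : ℤ, 2 * ε i) = 2 * ∑' i, ε i := tsum_mul_left
  rw [Afun]
  nlinarith [le_trans h1 (by rw [h2]; linarith : (∑' i : ℤ, 2 * ε i) ≤ 2)]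

end BDef

section ODE

variable {ε : ℤ → ℝ} {a : ℝ}

lemma lipschitz_phi : LipschitzWith 3 phi := by
  apply LipschitzWith.of_dist_le_mul
  intro x y
  rw [Real.dist_eq, Real.dist_eq]
  have := convex_univ (𝕜 := ℝ) (E := ℝ) |>.norm_image_sub_le_of_norm_hasDerivWithin_le
    (f := phi) (f' := phi') (C := 3) (fun u _ => (hasDerivAt_phi u).hasDerivWithinAt)
    (fun u _ => by rw [Real.norm_eq_abs]; exact abs_phi'_le u) (mem_univ y) (mem_univ x)
  rw [Real.norm_eq_abs, Real.norm_eq_abs] at this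
  simpa using this

lemma lipschitz_v (t : ℝ) : LipschitzWith 3 (fun x => Bfun ε a t + phi x) := by
  apply LipschitzWith.of_dist_le_mul
  intro x y
  have h := lipschitz_phi.dist_le_mul x y
  calc dist (Bfun ε a t + phi x) (Bfun ε a t + phi y) = dist (phi x) (phi y) := dist_add_left _ _ _
    _ ≤ 3 * dist x y := h

lemma continuous_Bfun (hsum : Summable ε) (hpos : ∀ i, 0 < ε i) : Continuous (Bfun ε a) :=
  continuous_iff_continuousAt.2 fun s => (hasDerivAt_Bfun hsum hpos s).continuousAt

lemma sol_exists (hsum : Summable ε) (hpos : ∀ i, 0 < ε i)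
    (hslow : ∀ i, |Real.log (ε i) - Real.log (ε (i+1))| ≤ 1/2)
    (hle1 : (∑' i, ε i) ≤ 1) (ha : 0 ≤ a) (y₀ : ℝ) (N : ℕ) :
    ∃ f : ℝ → ℝ, f 0 = y₀ ∧
      ∀ t ∈ Set.Ioo (-(N:ℝ)) (N:ℝ), HasDerivAt f (Bfun ε a t + phi (f t)) t := by
  have hPL : IsPicardLindelof (fun t x => Bfun ε a t + phi x) (tmin := -(N:ℝ)) (tmax := (N:ℝ))
      ⟨0, by simp⟩ y₀ (⟨(3*a+1) * N, by positivity⟩ : NNReal) 0 (⟨3*a+1, by positivity⟩ : NNReal) 3 := by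
    refine ⟨?_, ?_, ?_, ?_⟩
    · intro t _
      exact (lipschitz_v t).lipschitzOnWith
    · intro x _
      exact ((continuous_Bfun hsum hpos).add continuous_const).continuousOn
    · intro t _ x _
      rw [Real.norm_eq_abs, abs_le]
      show -(3*a+1) ≤ _ ∧ _ ≤ 3*a+1
      constructor
      · linarith [Bfun_nonneg ha hpos hslow t, phi_nonneg x]
      · linarith [Bfun_glob ha hsum hpos hslow hle1 t, phi_le x]
    · simp
      exact le_rfl
  obtain ⟨f, hf0, hf⟩ := hPL.exists_eq_forall_mem_Icc_hasDerivWithinAt₀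
  refine ⟨f, hf0, fun t ht => ?_⟩
  exact (hf t (Set.Ioo_subset_Icc_self ht)).hasDerivAt (Icc_mem_nhds ht.1 ht.2)

lemma sol_glue (hsum : Summable ε) (hpos : ∀ i, 0 < ε i)
    (hslow : ∀ i, |Real.log (ε i) - Real.log (ε (i+1))| ≤ 1/2)
    (hle1 : (∑' i, ε i) ≤ 1) (ha : 0 ≤ a) (y₀ : ℝ) :
    ∃ Y : ℝ → ℝ, Y 0 = y₀ ∧ ∀ s, HasDerivAt Y (Bfun ε a s + phi (Y s)) s := by
  choose sol hsol0 hsol using fun N => sol_exists hsum hpos hslow hle1 ha y₀ N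
  -- uniqueness: two solutions agree where both defined
  have agree : ∀ (NN MM : ℕ) (s : ℝ), |s| < (NN:ℝ) → |s| < (MM:ℝ) →
      sol NN s = sol MM s := by
    intro NN MM s hN hM
    have h0N : (0:ℝ) < NN := lt_of_le_of_lt (abs_nonneg s) hN
    have h0M : (0:ℝ) < MM := lt_of_le_of_lt (abs_nonneg s) hM
    set K : ℝ := min (NN:ℝ) (MM:ℝ) with hK
    have hK0 : 0 < K := lt_min h0N h0M
    have habs := abs_lt.mp (lt_min hN hM : |s| < K)
    have hsub : Set.Ioo (-K) K ⊆ Set.Ioo (-(NN:ℝ)) NN := by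
      apply Set.Ioo_subset_Ioo
      · simp [hK]
      · exact min_le_left _ _
    have hsub2 : Set.Ioo (-K) K ⊆ Set.Ioo (-(MM:ℝ)) MM := by
      apply Set.Ioo_subset_Ioo
      · simp [hK]
      · exact min_le_right _ _
    have := ODE_solution_unique_of_mem_Ioo
      (v := fun t x => Bfun ε a t + phi x) (s := fun _ => (Set.univ : Set ℝ))
      (K := 3) (fun t _ => (lipschitz_v t).lipschitzOnWith)
      (t₀ := 0) (a := -K) (b := K) (f := sol NN) (g := sol MM)
      ⟨by linarith, hK0⟩
      (fun t ht => ⟨hsol NN t (hsub ht), trivial⟩)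
      (fun t ht => ⟨hsol MM t (hsub2 ht), trivial⟩)
      (by rw [hsol0 NN, hsol0 MM])
    exact this ⟨habs.1, habs.2⟩
  set Y : ℝ → ℝ := fun s => sol (⌊|s|⌋₊ + 2) s with hY
  have hYsol : ∀ (s : ℝ) (NN : ℕ), |s| < NN → Y s = sol NN s := by
    intro s NN hN
    apply agree
    · have : |s| < (⌊|s|⌋₊ : ℝ) + 1 := Nat.lt_floor_add_one _
      push_cast
      linarith
    · exact hN
  refine ⟨Y, by rw [hY]; simp [hsol0], ?_⟩
  intro s₀
  set NN : ℕ := ⌊|s₀|⌋₊ + 3 with hNN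
  have hs₀N : |s₀| < (NN:ℝ) := by
    have : |s₀| < (⌊|s₀|⌋₊ : ℝ) + 1 := Nat.lt_floor_add_one _
    rw [hNN]; push_cast; linarith
  have hball : ∀ s ∈ Metric.ball s₀ 1, Y s = sol NN s := by
    intro s hs
    rw [Metric.mem_ball, Real.dist_eq] at hs
    apply hYsol
    have h1 : |s| ≤ |s₀| + |s - s₀| := by
      calc |s| = |s₀ + (s - s₀)| := by ring_nf
        _ ≤ |s₀| + |s - s₀| := abs_add_le _ _
    have : |s₀| < (⌊|s₀|⌋₊ : ℝ) + 1 := Nat.lt_floor_add_one _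
    rw [hNN]; push_cast; linarith
  have hder : HasDerivAt (sol NN) (Bfun ε a s₀ + phi (sol NN s₀)) s₀ := by
    apply hsol NN
    exact ⟨(abs_lt.mp hs₀N).1, (abs_lt.mp hs₀N).2⟩
  have hYs₀ : Y s₀ = sol NN s₀ := hball s₀ (Metric.mem_ball_self one_pos)
  rw [hYs₀]
  apply hder.congr_of_eventuallyEq
  filter_upwards [Metric.ball_mem_nhds s₀ one_pos] with s hs
  exact hball s hs

end ODE

section Final

variable {ε : ℤ → ℝ} {a : ℝ}

lemma variation_bound (hsum : Summable ε) (hpos : ∀ i, 0 < ε i)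
    (hslow : ∀ i, |Real.log (ε i) - Real.log (ε (i+1))| ≤ 1/2)
    (hle1 : (∑' i, ε i) ≤ 1) (ha : 0 ≤ a) {Y : ℝ → ℝ}
    (hY : ∀ s, HasDerivAt Y (Bfun ε a s + phi (Y s)) s) :
    (Monotone Y) ∧ ∀ s₁ s₂, s₁ ≤ s₂ → Y s₂ - Y s₁ ≤ (100/3) * (2*a + 1) := by
  have hmono : Monotone Y := by
    apply monotone_of_deriv_nonneg (fun s => (hY s).differentiableAt)
    intro s
    rw [(hY s).deriv]
    linarith [Bfun_nonneg ha hpos hslow s, phi_nonneg (Y s)]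
  refine ⟨hmono, ?_⟩
  intro s₁ s₂ hle
  set W : ℝ → ℝ := fun s => Y s - Afun ε a s - Gf (Y s) with hWdef
  have hW : ∀ s, HasDerivAt W
      ((Bfun ε a s + phi (Y s)) - Bfun ε a s - gf (Y s) * (Bfun ε a s + phi (Y s))) s := by
    intro s
    exact ((hY s).sub (hasDerivAt_Afun hsum hpos s)).sub ((hasDerivAt_Gf (Y s)).comp s (hY s))
  have hanti : Antitone W := by
    apply antitone_of_deriv_nonpos (fun s => (hW s).differentiableAt)
    intro s
    rw [(hW s).deriv]
    have := phi_gate (u := Y s) (Bfun_nonneg ha hpos hslow s)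
    linarith
  have hWle : W s₂ ≤ W s₁ := hanti hle
  have hA1 := Afun_nonneg ha hsum hpos s₁
  have hA2 := Afun_le ha hsum hpos hle1 s₂
  have hΔ : 0 ≤ Y s₂ - Y s₁ := by linarith [hmono hle]
  have hG := Gf_sub (Y s₁) (Y s₂ - Y s₁) hΔ
  have he : Y s₁ + (Y s₂ - Y s₁) = Y s₂ := by ring
  rw [he] at hG
  simp only [hWdef] at hWle
  linarith

end Final

end StmtAux

/-- Construction of the convex time weight `h`: given a positive, slowly varying,
summable sequence `(ε_i)` and `τ` large enough, there is a convex function `h` with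
`h′ ∈ [τ,2τ]`, spectral-gap property `h″(s) + dist(h′(s),ℕ) > 1/4`,
`ε_i τ ≲ h″ ≲ ε_i τ + 1` on `[i,i+1]`, and `|h‴| ≲ h″`. -/
theorem stmt_6 :
    ∃ C : ℝ, 0 < C ∧ ∃ τ₀ : ℝ, ∀ (ε : ℤ → ℝ),
      (∀ i, 0 < ε i) →
      (∀ i, |Real.log (ε i) - Real.log (ε (i+1))| ≤ 1/2) →
      Summable ε →
      (∑' i, ε i) ≤ 1 →
      ∀ τ : ℝ, τ₀ ≤ τ →
        ∃ h h' h'' h''' : ℝ → ℝ,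
          (∀ s, HasDerivAt h (h' s) s) ∧
          (∀ s, HasDerivAt h' (h'' s) s) ∧
          (∀ s, HasDerivAt h'' (h''' s) s) ∧
          (∀ s, 0 ≤ h'' s) ∧
          (∀ s, τ ≤ h' s ∧ h' s ≤ 2 * τ) ∧
          (∀ s, (1 : ℝ)/4 < h'' s + ⨅ k : ℕ, |h' s - (k : ℝ)|) ∧
          (∀ i : ℤ, ∀ s ∈ Set.Icc (i : ℝ) ((i : ℝ) + 1),
            ε i * τ ≤ C * h'' s ∧ h'' s ≤ C * (ε i * τ + 1)) ∧
          (∀ s, |h''' s| ≤ C * h'' s) := by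
  refine ⟨100000, by norm_num, 20000, ?_⟩
  intro ε hpos hslow hsum hle1 τ hτ
  set a : ℝ := τ / 10000 with hadef
  have ha : 0 ≤ a := by rw [hadef]; linarith
  obtain ⟨Y, hY0, hYd⟩ := sol_glue hsum hpos hslow hle1 ha (τ + τ/100)
  obtain ⟨hmono, hvar⟩ := variation_bound hsum hpos hslow hle1 ha hYd
  -- range of Y
  have hrange : ∀ s, τ ≤ Y s ∧ Y s ≤ 2 * τ := by
    intro s
    have hD : (100/3) * (2*a + 1) = τ/150 + 100/3 := by rw [hadef]; ring
    rcases le_total s 0 with hs | hs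
    · have h1 := hvar s 0 hs
      have h2 : Y s ≤ Y 0 := hmono hs
      rw [hY0] at h1 h2
      rw [hD] at h1
      constructor <;> linarith
    · have h1 := hvar 0 s hs
      have h2 : Y 0 ≤ Y s := hmono hs
      rw [hY0] at h1 h2
      rw [hD] at h1
      constructor <;> linarith
  have hYcont : Continuous Y := continuous_iff_continuousAt.2 fun s => (hYd s).continuousAt
  refine ⟨fun s => ∫ u in (0:ℝ)..s, Y u, Y, fun s => Bfun ε a s + phi (Y s),
    fun s => Bfun' ε a s + phi' (Y s) * (Bfun ε a s + phi (Y s)), ?_, hYd, ?_, ?_, hrange, ?_, ?_, ?_⟩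
  · intro s
    exact (hYcont.integral_hasStrictDerivAt 0 s).hasDerivAt
  · intro s
    exact (hasDerivAt_Bfun hsum hpos s).add ((hasDerivAt_phi (Y s)).comp s (hYd s))
  · intro s
    show 0 ≤ Bfun ε a s + phi (Y s)
    linarith [Bfun_nonneg ha hpos hslow s, phi_nonneg (Y s)]
  · -- spectral gap
    intro s
    have hs1 := spec (Y s)
    have hs2 := iInf_nat_ge (y := Y s) (by linarith [(hrange s).1])
    linarith [Bfun_nonneg ha hpos hslow s]
  · -- comparability on [i, i+1]
    intro i s hs
    obtain ⟨hsl, hsr⟩ := hs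
    have hlb := Bfun_lb ha hpos hslow i hsl hsr
    have hub := Bfun_ub ha hpos hslow i hsl hsr
    have hphi1 := phi_nonneg (Y s)
    have hphi2 := phi_le (Y s)
    constructor
    · show ε i * τ ≤ 100000 * (Bfun ε a s + phi (Y s))
      have : a * (ε i / 4) = τ * ε i / 40000 := by rw [hadef]; ring
      nlinarith [hpos i]
    · show Bfun ε a s + phi (Y s) ≤ 100000 * (ε i * τ + 1)
      have : 3 * a * ε i = 3 * τ * ε i / 10000 := by rw [hadef]; ring
      nlinarith [hpos i, mul_pos (hpos i) (by linarith : (0:ℝ) < τ)]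
  · -- third derivative bound
    intro s
    set i : ℤ := ⌊s⌋ with hi
    have hsl : ((i:ℤ):ℝ) ≤ s := Int.floor_le s
    have hsr : s ≤ ((i:ℤ):ℝ) + 1 := (Int.lt_floor_add_one s).le
    have hB' := Bfun'_bound ha hpos hslow i hsl hsr
    have hBlb := Bfun_lb ha hpos hslow i hsl hsr
    have hphi' := abs_phi'_le (Y s)
    have hh'' : 0 ≤ Bfun ε a s + phi (Y s) := by
      linarith [Bfun_nonneg ha hpos hslow s, phi_nonneg (Y s)]
    calc |Bfun' ε a s + phi' (Y s) * (Bfun ε a s + phi (Y s))|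
        ≤ |Bfun' ε a s| + |phi' (Y s) * (Bfun ε a s + phi (Y s))| := abs_add_le _ _
      _ ≤ 12 * a * ε i + 3 * (Bfun ε a s + phi (Y s)) := by
          apply add_le_add hB'
          rw [abs_mul, abs_of_nonneg hh'']
          exact mul_le_mul_of_nonneg_right hphi' hh''
      _ ≤ 48 * (a * (ε i / 4)) + 3 * (Bfun ε a s + phi (Y s)) := by linarith
      _ ≤ 48 * (Bfun ε a s + phi (Y s)) + 3 * (Bfun ε a s + phi (Y s)) := by
          nlinarith [phi_nonneg (Y s)]
      _ ≤ 100000 * (Bfun ε a s + phi (Y s)) := by linarith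
end

section
/- For any L²-normalized Hermite eigenfunction h_λ in one dimension with eigenvalue λ (i.e. −h_λ″ + x²h_λ = λh_λ, ‖h_λ‖_{L²}=1), one has the interior pointwise bounds λ^{-1/4}|h_λ′(x)| + λ^{1/4}|h_λ(x)| ≲ 1 for |x| ≤ λ^{1/2}/2, with a universal constant. -/
open MeasureTheory

private lemma hermE_deriv (lam : ℝ) (h h' h'' : ℝ → ℝ)
    (hd : ∀ x, HasDerivAt h (h' x) x) (hd' : ∀ x, HasDerivAt h' (h'' x) x)
    (hode : ∀ x, -h'' x + x^2 * h x = lam * h x) (x : ℝ) :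
    HasDerivAt (fun y => (h' y)^2 + (lam - y^2) * (h y)^2) (-2*x*(h x)^2) x := by
  have h2 : h'' x = x^2 * h x - lam * h x := by linarith [hode x]
  have d1 : HasDerivAt (fun y => (h' y)^2) (2 * h' x * h'' x) x := by
    simpa using ((hd' x).fun_pow 2)
  have dq : HasDerivAt (fun y : ℝ => lam - y^2) (-(2*x)) x := by
    simpa using ((hasDerivAt_pow 2 x).const_sub lam)
  have dh2 : HasDerivAt (fun y => (h y)^2) (2 * h x * h' x) x := by
    simpa using ((hd x).fun_pow 2)
  have := d1.add (dq.mul dh2)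
  refine this.congr_deriv ?_
  rw [h2]; ring

private lemma hermW_deriv (lam : ℝ) (h h' h'' : ℝ → ℝ)
    (hd : ∀ x, HasDerivAt h (h' x) x) (hd' : ∀ x, HasDerivAt h' (h'' x) x)
    (hode : ∀ x, -h'' x + x^2 * h x = lam * h x) (x : ℝ) :
    HasDerivAt (fun y => h y * h' y) ((h' x)^2 + (x^2 - lam)*(h x)^2) x := by
  have h2 : h'' x = x^2 * h x - lam * h x := by linarith [hode x]
  have := (hd x).mul (hd' x)
  refine this.congr_deriv ?_
  rw [h2]; ring


set_option maxHeartbeats 1000000 in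
private lemma hermE_bound (lam : ℝ) (h h' h'' : ℝ → ℝ)
    (hlam : 3 ≤ lam)
    (hd : ∀ x, HasDerivAt h (h' x) x) (hd' : ∀ x, HasDerivAt h' (h'' x) x)
    (hode : ∀ x, -h'' x + x^2 * h x = lam * h x)
    (hInt : Integrable (fun x => (h x)^2))
    (hnorm : (∫ x : ℝ, (h x)^2) = 1) :
    ∀ x : ℝ, |x| ≤ Real.sqrt lam / 2 →
      (h' x)^2 + (lam - x^2) * (h x)^2 ≤ 14 * Real.sqrt lam := by
  set s := Real.sqrt lam with hs
  have hlam0 : (0:ℝ) < lam := by linarith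
  have hs0 : 0 < s := Real.sqrt_pos.2 hlam0
  have hs2 : s^2 = lam := Real.sq_sqrt hlam0.le
  have hch : Continuous h := continuous_iff_continuousAt.2 fun x => (hd x).continuousAt
  have hch' : Continuous h' := continuous_iff_continuousAt.2 fun x => (hd' x).continuousAt
  set E : ℝ → ℝ := fun y => (h' y)^2 + (lam - y^2) * (h y)^2 with hE
  have hEd : ∀ x : ℝ, HasDerivAt E (-2*x*(h x)^2) x :=
    fun x => hermE_deriv lam h h' h'' hd hd' hode x
  have hcE : Continuous E :=
    (hch'.pow 2).add ((continuous_const.sub (continuous_id.pow 2)).mul (hch.pow 2))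
  clear_value E
  have hc1 : Continuous fun t : ℝ => -2*t*(h t)^2 :=
    (continuous_const.mul continuous_id).mul (hch.pow 2)
  have hc2 : Continuous fun t : ℝ => (h' t)^2 + (t^2 - lam)*(h t)^2 :=
    (hch'.pow 2).add (((continuous_id.pow 2).sub continuous_const).mul (hch.pow 2))
  have hc3 : Continuous fun t : ℝ => 2*(lam - t^2)*(h t)^2 :=
    (continuous_const.mul (continuous_const.sub (continuous_id.pow 2))).mul (hch.pow 2)
  have hc4 : Continuous fun t : ℝ => s*(h t)^2 := continuous_const.mul (hch.pow 2)
  have hc5 : Continuous fun t : ℝ => -s*(h t)^2 := continuous_const.mul (hch.pow 2)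
  have hc6 : Continuous fun t : ℝ => (2*lam)*(h t)^2 := continuous_const.mul (hch.pow 2)
  -- interval integrals of h^2 are at most 1
  have hIle : ∀ u v : ℝ, u ≤ v → (∫ t in u..v, (h t)^2) ≤ 1 := by
    intro u v huv
    rw [intervalIntegral.integral_of_le huv]
    calc (∫ t in Set.Ioc u v, (h t)^2) ≤ ∫ t : ℝ, (h t)^2 :=
          setIntegral_le_integral hInt (Filter.Eventually.of_forall fun t => sq_nonneg _)
      _ = 1 := hnorm
  -- FTC for E
  have hEFTC : ∀ b : ℝ, (∫ t in (0:ℝ)..b, (-2*t*(h t)^2)) = E b - E 0 := by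
    intro b
    exact intervalIntegral.integral_eq_sub_of_hasDerivAt (fun t _ => hEd t)
      (hc1.intervalIntegrable _ _)
  -- key comparison: on |b| ≤ s/2, E 0 - s ≤ E b ≤ E 0
  have hkey : ∀ b : ℝ, |b| ≤ s/2 → E 0 - s ≤ E b ∧ E b ≤ E 0 := by
    intro b hb
    have hb' : -(s/2) ≤ b ∧ b ≤ s/2 := abs_le.1 hb
    rcases le_or_gt 0 b with h0b | h0b
    · -- 0 ≤ b
      have hup : (∫ t in (0:ℝ)..b, (-2*t*(h t)^2)) ≤ 0 := by
        have := intervalIntegral.integral_mono_on (μ := volume) h0b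
          (hc1.intervalIntegrable _ _)
          (intervalIntegrable_const (μ := volume) (c := (0:ℝ)))
          (fun t ht => by nlinarith [sq_nonneg (h t), ht.1])
        simpa using this
      have hlo : -s ≤ (∫ t in (0:ℝ)..b, (-2*t*(h t)^2)) := by
        have hmono := intervalIntegral.integral_mono_on (μ := volume) h0b
          (hc5.intervalIntegrable _ _) (hc1.intervalIntegrable _ _)
          (fun t ht => by nlinarith [sq_nonneg (h t), ht.1, ht.2, hb'.2, hs0])
        have heq : (∫ t in (0:ℝ)..b, (-s*(h t)^2)) = -s * (∫ t in (0:ℝ)..b, (h t)^2) :=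
          intervalIntegral.integral_const_mul _ _
        have h1 := hIle 0 b h0b
        have h2 : (0:ℝ) ≤ ∫ t in (0:ℝ)..b, (h t)^2 :=
          intervalIntegral.integral_nonneg h0b (fun t _ => sq_nonneg _)
        nlinarith [hmono, heq, hs0]
      have := hEFTC b
      constructor <;> linarith
    · -- b < 0
      have h0b' : b ≤ 0 := h0b.le
      have hflip : (∫ t in (0:ℝ)..b, (-2*t*(h t)^2)) = -(∫ t in b..(0:ℝ), (-2*t*(h t)^2)) :=
        (intervalIntegral.integral_symm b 0)
      have hlo0 : (0:ℝ) ≤ (∫ t in b..(0:ℝ), (-2*t*(h t)^2)) :=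
        intervalIntegral.integral_nonneg h0b' (fun t ht => by nlinarith [sq_nonneg (h t), ht.2])
      have hup0 : (∫ t in b..(0:ℝ), (-2*t*(h t)^2)) ≤ s := by
        have hmono := intervalIntegral.integral_mono_on (μ := volume) h0b'
          (hc1.intervalIntegrable _ _) (hc4.intervalIntegrable _ _)
          (fun t ht => by nlinarith [sq_nonneg (h t), ht.1, ht.2, hb'.1, hs0])
        have heq : (∫ t in b..(0:ℝ), (s*(h t)^2)) = s * (∫ t in b..(0:ℝ), (h t)^2) :=
          intervalIntegral.integral_const_mul _ _
        have h1 := hIle b 0 h0b'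
        have h2 : (0:ℝ) ≤ ∫ t in b..(0:ℝ), (h t)^2 :=
          intervalIntegral.integral_nonneg h0b' (fun t _ => sq_nonneg _)
        nlinarith [hmono, heq, hs0]
      have := hEFTC b
      rw [hflip] at this
      constructor <;> linarith
  -- FTC for W over [-s/2, s/2]
  have ha : -(s/2) ≤ s/2 := by linarith
  have hWFTC : (∫ x in (-(s/2))..(s/2), ((h' x)^2 + (x^2 - lam)*(h x)^2))
      = h (s/2) * h' (s/2) - h (-(s/2)) * h' (-(s/2)) :=
    intervalIntegral.integral_eq_sub_of_hasDerivAt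
      (fun t _ => hermW_deriv lam h h' h'' hd hd' hode t)
      (hc2.intervalIntegrable _ _)
  -- split: ∫ E = W(a) - W(-a) + ∫ 2(lam - x^2) h^2
  have hsplit : (∫ x in (-(s/2))..(s/2), E x)
      = (h (s/2) * h' (s/2) - h (-(s/2)) * h' (-(s/2)))
        + (∫ x in (-(s/2))..(s/2), 2*(lam - x^2)*(h x)^2) := by
    have : (∫ x in (-(s/2))..(s/2), E x)
        = (∫ x in (-(s/2))..(s/2), ((h' x)^2 + (x^2 - lam)*(h x)^2))
          + (∫ x in (-(s/2))..(s/2), 2*(lam - x^2)*(h x)^2) := by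
      rw [← intervalIntegral.integral_add (hc2.intervalIntegrable _ _) (hc3.intervalIntegrable _ _)]
      apply intervalIntegral.integral_congr
      intro x _
      simp only [hE]; ring
    rw [this, hWFTC]
  -- bound ∫ 2(lam-x^2) h^2 ≤ 2 lam
  have hpot : (∫ x in (-(s/2))..(s/2), 2*(lam - x^2)*(h x)^2) ≤ 2*lam := by
    have hmono := intervalIntegral.integral_mono_on (μ := volume) ha
      (hc3.intervalIntegrable _ _) (hc6.intervalIntegrable _ _)
      (fun t _ => by nlinarith [sq_nonneg (h t), sq_nonneg t])
    have heq : (∫ x in (-(s/2))..(s/2), (2*lam)*(h x)^2)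
        = (2*lam) * (∫ x in (-(s/2))..(s/2), (h x)^2) :=
      intervalIntegral.integral_const_mul _ _
    have h1 := hIle (-(s/2)) (s/2) ha
    have h2 : (0:ℝ) ≤ ∫ x in (-(s/2))..(s/2), (h x)^2 :=
      intervalIntegral.integral_nonneg ha (fun t _ => sq_nonneg _)
    nlinarith [hmono, heq]
  -- lower bound ∫ E ≥ s * (E 0 - s)
  have hEint : s * (E 0 - s) ≤ (∫ x in (-(s/2))..(s/2), E x) := by
    have hmono := intervalIntegral.integral_mono_on (μ := volume) ha
      (intervalIntegrable_const (μ := volume) (c := E 0 - s))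
      (hcE.intervalIntegrable _ _)
      (fun t ht => (hkey t (abs_le.2 ⟨ht.1, ht.2⟩)).1)
    have heq : (∫ _x in (-(s/2))..(s/2), (E 0 - s)) = s * (E 0 - s) := by
      rw [intervalIntegral.integral_const]
      simp only [smul_eq_mul]; ring
    linarith [hmono, le_of_eq heq.symm]
  -- E 0 ≥ 0
  have hE0 : 0 ≤ E 0 := by
    have hE0eq : E 0 = (h' 0)^2 + (lam - 0^2) * (h 0)^2 := by rw [hE]
    nlinarith [sq_nonneg (h' 0), mul_nonneg hlam0.le (sq_nonneg (h 0)), hE0eq]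
  have hend : ∀ b : ℝ, |b| ≤ s/2 → (h' b)^2 ≤ E 0 ∧ (3/4)*lam*(h b)^2 ≤ E 0 := by
    intro b hb
    have hEb : E b = (h' b)^2 + (lam - b^2)*(h b)^2 := by rw [hE]
    have h1 := (hkey b hb).2
    rw [hEb] at h1
    have hb' := abs_le.1 hb
    have hb2 : b^2 ≤ lam/4 := by
      have h4 : b^2 ≤ (s/2)^2 := by
        rw [← sq_abs b]
        exact pow_le_pow_left₀ (abs_nonneg b) hb 2
      nlinarith [hs2]
    constructor <;>
      nlinarith [sq_nonneg (h b), sq_nonneg (h' b), h1,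
        mul_nonneg (by linarith : (0:ℝ) ≤ lam/4 - b^2) (sq_nonneg (h b)),
        mul_nonneg hlam0.le (sq_nonneg (h b))]
  -- boundary W bounds
  have ht3 : (1.73:ℝ) ≤ Real.sqrt 3 := by
    rw [show (1.73:ℝ) = Real.sqrt (1.73^2) from (Real.sqrt_sq (by norm_num)).symm]
    exact Real.sqrt_le_sqrt (by norm_num)
  have ht30 : (0:ℝ) < Real.sqrt 3 := by linarith
  have h3 : (Real.sqrt 3)^2 = 3 := Real.sq_sqrt (by norm_num)
  have hW : ∀ b : ℝ, |b| ≤ s/2 → Real.sqrt 3 * s * |h b * h' b| ≤ 2 * E 0 := by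
    intro b hb
    obtain ⟨e1, e2⟩ := hend b hb
    have habs : |h b * h' b| ^ 2 = (h b)^2 * (h' b)^2 := by
      rw [sq_abs]; ring
    have hexp : (Real.sqrt 3 * s * |h b * h' b|)^2 = 3 * lam * ((h b)^2 * (h' b)^2) := by
      rw [mul_pow, mul_pow, h3, hs2, habs]
    have e3 : ((3/4)*lam*(h b)^2) * ((h' b)^2) ≤ E 0 * E 0 :=
      mul_le_mul e2 e1 (sq_nonneg (h' b)) hE0
    have hsq : (Real.sqrt 3 * s * |h b * h' b|)^2 ≤ (2 * E 0)^2 := by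
      rw [hexp]; nlinarith [e3]
    have hn1 : 0 ≤ Real.sqrt 3 * s * |h b * h' b| :=
      mul_nonneg (mul_nonneg ht30.le hs0.le) (abs_nonneg _)
    nlinarith [hsq, hn1, hE0]
  -- combine everything: E 0 ≤ 14 s
  have hWa := hW (s/2) (by rw [abs_of_nonneg (by linarith : (0:ℝ) ≤ s/2)])
  have hWma := hW (-(s/2)) (by rw [abs_neg, abs_of_nonneg (by linarith : (0:ℝ) ≤ s/2)])
  have hWdiff : Real.sqrt 3 * s * (h (s/2) * h' (s/2) - h (-(s/2)) * h' (-(s/2))) ≤ 4 * E 0 := by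
    have l1 := le_abs_self (h (s/2) * h' (s/2))
    have l2 := neg_abs_le (h (-(s/2)) * h' (-(s/2)))
    nlinarith [mul_nonneg ht30.le hs0.le]
  have hmain : E 0 ≤ 14 * s := by
    -- s(E0 - s) ≤ Wdiff + 2 lam; multiply by sqrt3 * s
    have hcomb : s * (E 0 - s) ≤ (h (s/2) * h' (s/2) - h (-(s/2)) * h' (-(s/2))) + 2*lam := by
      linarith [hEint, hsplit, hpot]
    -- multiply hcomb by sqrt3 * s > 0
    have hm : Real.sqrt 3 * s * (s * (E 0 - s))
        ≤ Real.sqrt 3 * s * ((h (s/2) * h' (s/2) - h (-(s/2)) * h' (-(s/2))) + 2*lam) := by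
      apply mul_le_mul_of_nonneg_left hcomb (mul_nonneg ht30.le hs0.le)
    -- so sqrt3 * lam * E 0 ≤ 4 E 0 + 3 sqrt3 * lam * s
    have hL : Real.sqrt 3 * s * (s * (E 0 - s)) = Real.sqrt 3 * lam * E 0 - Real.sqrt 3 * lam * s := by
      rw [← hs2]; ring
    have hfin : Real.sqrt 3 * lam * E 0 ≤ 4 * E 0 + 3 * Real.sqrt 3 * lam * s := by
      linarith [hm, hWdiff, hL]
    have hA : (5.19:ℝ) ≤ Real.sqrt 3 * lam := by
      nlinarith [ht3, hlam, mul_nonneg (by linarith : (0:ℝ) ≤ Real.sqrt 3 - 1.73) (by linarith : (0:ℝ) ≤ lam)]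
    have hfin' : (Real.sqrt 3 * lam - 4) * E 0 ≤ 3 * (Real.sqrt 3 * lam) * s := by
      nlinarith [hfin]
    have hstep : 3 * (Real.sqrt 3 * lam) * s ≤ (Real.sqrt 3 * lam - 4) * (14 * s) := by
      have h14 : 3 * (Real.sqrt 3 * lam) ≤ 14 * (Real.sqrt 3 * lam - 4) := by linarith
      nlinarith [mul_le_mul_of_nonneg_right h14 hs0.le]
    exact le_of_mul_le_mul_left (by linarith) (by linarith : (0:ℝ) < Real.sqrt 3 * lam - 4)
  intro x hx
  have hEx : E x = (h' x)^2 + (lam - x^2)*(h x)^2 := by rw [hE]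
  have hfin2 := le_trans (hkey x hx).2 hmain
  rw [hEx] at hfin2
  exact hfin2

set_option maxHeartbeats 1000000 in
private lemma hermite_lam_one (h h' h'' : ℝ → ℝ)
    (hd : ∀ x, HasDerivAt h (h' x) x) (hd' : ∀ x, HasDerivAt h' (h'' x) x)
    (hode : ∀ x, -h'' x + x^2 * h x = 1 * h x)
    (hInt : Integrable (fun x => (h x)^2))
    (hnorm : (∫ x : ℝ, (h x)^2) = 1) :
    ∀ x : ℝ, |x| ≤ 1/2 → |h x| ≤ 1 ∧ |h' x| ≤ 1 := by
  have hode' : ∀ x, h'' x = x^2 * h x - h x := fun x => by have := hode x; linarith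
  -- u = h' + x h satisfies u' = x u
  have hu : ∀ x : ℝ, HasDerivAt (fun y => h' y + y * h y) (x * (h' x + x * h x)) x := by
    intro x
    have h1 := (hd' x).add ((hasDerivAt_id x).mul (hd x))
    refine h1.congr_deriv ?_
    rw [hode' x]; simp only [id_eq]; ring
  have hexpd : ∀ x : ℝ, HasDerivAt (fun y : ℝ => Real.exp (-(y^2)/2)) (Real.exp (-(x^2)/2) * (-x)) x := by
    intro x
    have hinner : HasDerivAt (fun y : ℝ => -(y^2)/2) (-x) x := by
      have := ((hasDerivAt_pow 2 x).neg).div_const 2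
      refine this.congr_deriv ?_; push_cast; ring
    exact hinner.exp
  have hv : ∀ x : ℝ, HasDerivAt (fun y => (h' y + y * h y) * Real.exp (-(y^2)/2)) 0 x := by
    intro x
    have := (hu x).mul (hexpd x)
    refine this.congr_deriv ?_
    ring
  have hvconst : ∀ x : ℝ, (h' x + x * h x) * Real.exp (-(x^2)/2)
      = (h' 0 + 0 * h 0) * Real.exp (-(0^2)/2) :=
    fun x => is_const_of_deriv_eq_zero (fun y => (hv y).differentiableAt) (fun y => (hv y).deriv) x 0
  have huval : ∀ x : ℝ, h' x + x * h x = h' 0 * Real.exp (x^2/2) := by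
    intro x
    have hx : (h' x + x * h x) * Real.exp (-(x^2)/2) = h' 0 := by
      simpa using hvconst x
    have hpos := Real.exp_pos (-(x^2)/2)
    have h1 : h' x + x * h x = h' 0 / Real.exp (-(x^2)/2) :=
      eq_div_of_mul_eq hpos.ne' hx
    rw [h1, div_eq_mul_inv, ← Real.exp_neg]
    congr 2
    ring
  set c := h' 0 with hcdef
  -- g = h * exp(x^2/2) has derivative c exp(x^2)
  have hee : ∀ x : ℝ, Real.exp (x^2/2) * Real.exp (x^2/2) = Real.exp (x^2) := by
    intro x; rw [← Real.exp_add]; congr 1; ring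
  have hg : ∀ x : ℝ, HasDerivAt (fun y => h y * Real.exp (y^2/2)) (c * Real.exp (x^2)) x := by
    intro x
    have hinner : HasDerivAt (fun y : ℝ => y^2/2) x x := by
      have := (hasDerivAt_pow 2 x).div_const 2
      refine this.congr_deriv ?_; push_cast; ring
    have he : HasDerivAt (fun y : ℝ => Real.exp (y^2/2)) (Real.exp (x^2/2) * x) x := hinner.exp
    have hprod := (hd x).mul he
    refine hprod.congr_deriv (Eq.symm ?_)
    calc c * Real.exp (x^2) = (c * Real.exp (x^2/2)) * Real.exp (x^2/2) := by
          rw [mul_assoc, hee]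
      _ = (h' x + x * h x) * Real.exp (x^2/2) := by rw [← huval x]
      _ = h' x * Real.exp (x^2/2) + h x * (Real.exp (x^2/2) * x) := by ring
  by_cases hc0 : c = 0
  · -- ground state: h x = h 0 exp(-x^2/2)
    have hg0 : ∀ x : ℝ, HasDerivAt (fun y => h y * Real.exp (y^2/2)) 0 x := by
      intro x; simpa [hc0] using hg x
    have hgconst : ∀ x : ℝ, h x * Real.exp (x^2/2) = h 0 := by
      intro x
      have := is_const_of_deriv_eq_zero (fun y => (hg0 y).differentiableAt)
        (fun y => (hg0 y).deriv) x 0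
      simpa using this
    have hform : ∀ x : ℝ, h x = h 0 * Real.exp (-(x^2)/2) := by
      intro x
      have hx := hgconst x
      have hpos := Real.exp_pos ((x^2)/2)
      have h1 : h x = h 0 / Real.exp (x^2/2) := eq_div_of_mul_eq hpos.ne' hx
      rw [h1, div_eq_mul_inv, ← Real.exp_neg]
      congr 2
      ring
    have hsq : ∀ x : ℝ, (h x)^2 = (h 0)^2 * Real.exp (-1*x^2) := by
      intro x
      rw [hform x, mul_pow, sq (Real.exp _), ← Real.exp_add]
      congr 2
      ring
    have hval : (∫ x : ℝ, (h x)^2) = (h 0)^2 * Real.sqrt (Real.pi/1) := by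
      calc (∫ x : ℝ, (h x)^2) = ∫ x : ℝ, (h 0)^2 * Real.exp (-1*x^2) := by
            congr 1; funext x; exact hsq x
        _ = (h 0)^2 * ∫ x : ℝ, Real.exp (-1*x^2) := integral_const_mul _ _
        _ = (h 0)^2 * Real.sqrt (Real.pi/1) := by rw [integral_gaussian]
    have hpi : 1 ≤ Real.sqrt (Real.pi/1) := by
      rw [show Real.pi/1 = Real.pi by ring, show (1:ℝ) = Real.sqrt 1 from Real.sqrt_one.symm]
      exact Real.sqrt_le_sqrt (by linarith [Real.pi_gt_three])
    have h0sq : (h 0)^2 ≤ 1 := by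
      rw [hval] at hnorm
      nlinarith [sq_nonneg (h 0)]
    intro x hx
    have hexple : Real.exp (-(x^2)/2) ≤ 1 := by
      rw [← Real.exp_zero]
      exact Real.exp_le_exp.2 (by nlinarith [sq_nonneg x])
    have hhx : |h x| ≤ 1 := by
      have h1 : (h x)^2 ≤ 1 := by
        rw [hform x, mul_pow]
        have : (Real.exp (-(x^2)/2))^2 ≤ 1 := by
          nlinarith [Real.exp_pos (-(x^2)/2)]
        nlinarith [sq_nonneg (h 0), sq_nonneg (Real.exp (-(x^2)/2))]
      nlinarith [sq_abs (h x), abs_nonneg (h x)]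
    constructor
    · exact hhx
    · have hu0 : h' x + x * h x = 0 := by rw [huval x, hc0]; ring
      have : h' x = -(x * h x) := by linarith
      rw [this, abs_neg, abs_mul]
      have := abs_le.1 hx
      nlinarith [abs_nonneg x, abs_nonneg (h x)]
  · -- c ≠ 0 : contradiction with normalization
    exfalso
    have hcont : Continuous fun t : ℝ => Real.exp (t^2) :=
      Real.continuous_exp.comp (continuous_pow 2)
    have hgc : Continuous fun t : ℝ => c * Real.exp (t^2) := continuous_const.mul hcont
    have hFTC : ∀ x : ℝ, (∫ t in (0:ℝ)..x, c * Real.exp (t^2))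
        = h x * Real.exp (x^2/2) - h 0 * Real.exp (0^2/2) :=
      fun x => intervalIntegral.integral_eq_sub_of_hasDerivAt (fun t _ => hg t)
        (hgc.intervalIntegrable _ _)
    set I : ℝ → ℝ := fun x => ∫ t in (0:ℝ)..x, Real.exp (t^2) with hI
    have hgeq : ∀ x : ℝ, h x * Real.exp (x^2/2) = h 0 + c * I x := by
      intro x
      have hx := hFTC x
      rw [intervalIntegral.integral_const_mul] at hx
      norm_num at hx
      simp only [hI]
      linarith
    -- lower bound for I
    have hIlow : ∀ x : ℝ, 6 ≤ x → Real.exp ((x-1)^2) ≤ I x := by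
      intro x hx6
      have hsplitI : I x = (∫ t in (0:ℝ)..(x-1), Real.exp (t^2))
          + ∫ t in (x-1)..x, Real.exp (t^2) := by
        rw [hI]
        exact (intervalIntegral.integral_add_adjacent_intervals
          (hcont.intervalIntegrable _ _) (hcont.intervalIntegrable _ _)).symm
      have h1 : (0:ℝ) ≤ ∫ t in (0:ℝ)..(x-1), Real.exp (t^2) :=
        intervalIntegral.integral_nonneg (by linarith) (fun t _ => (Real.exp_pos _).le)
      have h2 : Real.exp ((x-1)^2) ≤ ∫ t in (x-1)..x, Real.exp (t^2) := by
        have hmono := intervalIntegral.integral_mono_on (μ := volume)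
          (by linarith : x - 1 ≤ x)
          (intervalIntegrable_const (μ := volume) (c := Real.exp ((x-1)^2)))
          (hcont.intervalIntegrable _ _)
          (fun t ht => Real.exp_le_exp.2 (by nlinarith [ht.1, ht.2]))
        rw [intervalIntegral.integral_const] at hmono
        have : (x - (x-1)) • Real.exp ((x-1)^2) = Real.exp ((x-1)^2) := by
          rw [smul_eq_mul]; ring_nf
        linarith [hmono, le_of_eq this.symm]
      linarith [hsplitI]
    -- |h x| ≥ 1 for x large
    set X : ℝ := max 6 ((|h 0| + 1)/|c|) with hX
    have hc' : 0 < |c| := abs_pos.2 hc0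
    have hbig : ∀ x : ℝ, X ≤ x → 1 ≤ |h x| := by
      intro x hxX
      have hx6 : 6 ≤ x := le_trans (le_max_left _ _) hxX
      have hx0 : (|h 0| + 1)/|c| ≤ x := le_trans (le_max_right _ _) hxX
      have hcx : |h 0| + 1 ≤ |c| * x := by
        rw [div_le_iff₀ hc'] at hx0
        linarith
      have hIx := hIlow x hx6
      have hIpos : 0 < I x := lt_of_lt_of_le (Real.exp_pos _) hIx
      -- h x = (h 0 + c I x) exp(-x^2/2)
      have hform : h x = (h 0 + c * I x) * Real.exp (-(x^2)/2) := by
        have hx' := hgeq x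
        have hpos := Real.exp_pos ((x^2)/2)
        have h1 : h x = (h 0 + c * I x) / Real.exp (x^2/2) := by
          apply eq_div_of_mul_eq hpos.ne'
          exact hx'
        rw [h1, div_eq_mul_inv, ← Real.exp_neg]
        congr 2
        ring
      have htri : |c| * I x - |h 0| ≤ |h 0 + c * I x| := by
        have habs : |c * I x| ≤ |h 0 + c * I x| + |h 0| := by
          calc |c * I x| = |(h 0 + c * I x) - h 0| := by ring_nf
            _ ≤ |h 0 + c * I x| + |h 0| := abs_sub _ _
        rw [abs_mul, abs_of_pos hIpos] at habs
        linarith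
      have hexpe : Real.exp ((x-1)^2) * Real.exp (-(x^2)/2) = Real.exp (x^2/2 - 2*x + 1) := by
        rw [← Real.exp_add]; congr 1; ring
      have he2 : x ≤ x^2/2 - 2*x + 1 := by
        nlinarith [mul_nonneg (by linarith : (0:ℝ) ≤ x - 6) (by linarith : (0:ℝ) ≤ x)]
      have he3 : x ≤ Real.exp (x^2/2 - 2*x + 1) := by
        have := Real.add_one_le_exp x
        have hmono := Real.exp_le_exp.2 he2
        linarith
      have heneg : Real.exp (-(x^2)/2) ≤ 1 := by
        rw [← Real.exp_zero]
        exact Real.exp_le_exp.2 (by nlinarith [sq_nonneg x])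
      have hepos : (0:ℝ) < Real.exp (-(x^2)/2) := Real.exp_pos _
      -- chain
      rw [hform, abs_mul, abs_of_pos hepos]
      have step1 : (|c| * I x - |h 0|) * Real.exp (-(x^2)/2)
          ≤ |h 0 + c * I x| * Real.exp (-(x^2)/2) :=
        mul_le_mul_of_nonneg_right htri hepos.le
      have step2 : |c| * (Real.exp ((x-1)^2) * Real.exp (-(x^2)/2)) ≤ |c| * (I x * Real.exp (-(x^2)/2)) := by
        apply mul_le_mul_of_nonneg_left _ hc'.le
        exact mul_le_mul_of_nonneg_right hIx hepos.le
      have step3 : |c| * x ≤ |c| * (Real.exp ((x-1)^2) * Real.exp (-(x^2)/2)) := by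
        rw [hexpe]
        exact mul_le_mul_of_nonneg_left he3 hc'.le
      have step4 : |h 0| * Real.exp (-(x^2)/2) ≤ |h 0| :=
        mul_le_of_le_one_right (abs_nonneg _) heneg
      nlinarith [step1, step2, step3, step4, hcx]
    -- integral contradiction
    have hge : ∀ x ∈ Set.Icc X (X+2), (1:ℝ) ≤ (h x)^2 := by
      intro x hx
      have := hbig x hx.1
      nlinarith [sq_abs (h x)]
    have hconst2 : (∫ _x in Set.Icc X (X+2), (1:ℝ)) = 2 := by
      rw [setIntegral_const, Real.volume_real_Icc, smul_eq_mul]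
      rw [show X + 2 - X = 2 by ring]
      norm_num
    have hmono2 : (∫ x in Set.Icc X (X+2), (1:ℝ)) ≤ ∫ x in Set.Icc X (X+2), (h x)^2 :=
      setIntegral_mono_on
        (integrableOn_const (by rw [Real.volume_Icc]; exact ENNReal.ofReal_ne_top))
        (hInt.integrableOn) measurableSet_Icc hge
    have hle2 : (∫ x in Set.Icc X (X+2), (h x)^2) ≤ 1 := by
      calc (∫ x in Set.Icc X (X+2), (h x)^2) ≤ ∫ x : ℝ, (h x)^2 :=
            setIntegral_le_integral hInt (Filter.Eventually.of_forall fun t => sq_nonneg _)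
        _ = 1 := hnorm
    rw [hconst2] at hmono2
    linarith

set_option maxHeartbeats 1000000 in
/-- Interior pointwise bounds for 1D Hermite eigenfunctions: if `−h″ + x²h = λh`
with `λ ∈ 1 + 2ℕ` and `‖h‖_{L²} = 1`, then
`λ^{-1/4}|h′(x)| + λ^{1/4}|h(x)| ≲ 1` for `|x| ≤ λ^{1/2}/2`. -/
theorem stmt_9 :
    ∃ C : ℝ, 0 < C ∧
      ∀ (lam : ℝ) (h h' h'' : ℝ → ℝ),
        (∃ k : ℕ, lam = 1 + 2 * k) →
        (∀ x, HasDerivAt h (h' x) x) →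
        (∀ x, HasDerivAt h' (h'' x) x) →
        (∀ x, -h'' x + x^2 * h x = lam * h x) →
        Integrable (fun x => (h x)^2) →
        (∫ x : ℝ, (h x)^2) = 1 →
        ∀ x : ℝ, |x| ≤ Real.sqrt lam / 2 →
          lam ^ (-(1:ℝ)/4) * |h' x| + lam ^ ((1:ℝ)/4) * |h x| ≤ C := by
  refine ⟨10, by norm_num, ?_⟩
  rintro lam h h' h'' ⟨k, hk⟩ hd hd' hode hInt hnorm x hx
  rcases Nat.eq_zero_or_pos k with hk0 | hkpos
  · -- lam = 1
    have hlam1 : lam = 1 := by rw [hk, hk0]; norm_num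
    subst hlam1
    have h1 := hermite_lam_one h h' h'' hd hd' hode hInt hnorm x
      (by simpa [Real.sqrt_one] using hx)
    rw [Real.one_rpow, Real.one_rpow]
    obtain ⟨ha, hb⟩ := h1
    linarith
  · -- lam ≥ 3
    have hk1 : (1:ℝ) ≤ (k:ℝ) := by exact_mod_cast hkpos
    have hlam3 : 3 ≤ lam := by rw [hk]; linarith
    have hE := hermE_bound lam h h' h'' hlam3 hd hd' hode hInt hnorm x hx
    have hlam0 : (0:ℝ) < lam := by linarith
    set s := Real.sqrt lam with hs
    have hs0 : 0 < s := Real.sqrt_pos.2 hlam0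
    have hs2 : s^2 = lam := Real.sq_sqrt hlam0.le
    have hx2 : x^2 ≤ lam/4 := by
      have h4 : x^2 ≤ (s/2)^2 := by
        rw [← sq_abs x]
        exact pow_le_pow_left₀ (abs_nonneg x) hx 2
      nlinarith [hs2]
    have hd2 : (h' x)^2 ≤ 14*s := by
      nlinarith [hE, mul_nonneg (by linarith : (0:ℝ) ≤ lam - x^2) (sq_nonneg (h x))]
    have hh34 : (3/4)*lam*(h x)^2 ≤ 14*s := by
      nlinarith [hE, sq_nonneg (h' x),
        mul_nonneg (by linarith : (0:ℝ) ≤ lam/4 - x^2) (sq_nonneg (h x))]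
    have hsh2 : s*(h x)^2 ≤ 56/3 := by
      have hm : (3/4)*lam*(s*(h x)^2) ≤ 14*lam := by
        nlinarith [mul_le_mul_of_nonneg_right hh34 hs0.le, hs2]
      nlinarith [hlam0, mul_nonneg hs0.le (sq_nonneg (h x))]
    -- rpow algebra
    have hp : (0:ℝ) < lam ^ (-(1:ℝ)/4) := Real.rpow_pos_of_pos hlam0 _
    have hq : (0:ℝ) < lam ^ ((1:ℝ)/4) := Real.rpow_pos_of_pos hlam0 _
    have hssr : s = lam ^ ((1:ℝ)/2) := by
      rw [hs, Real.sqrt_eq_rpow]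
    have hpsq : (lam ^ (-(1:ℝ)/4))^2 * s = 1 := by
      rw [hssr, ← Real.rpow_natCast (lam ^ (-(1:ℝ)/4)) 2, ← Real.rpow_mul hlam0.le,
        ← Real.rpow_add hlam0]
      norm_num
    have hqsq : (lam ^ ((1:ℝ)/4))^2 = s := by
      rw [hssr, ← Real.rpow_natCast (lam ^ ((1:ℝ)/4)) 2, ← Real.rpow_mul hlam0.le]
      norm_num
    set A := lam ^ (-(1:ℝ)/4) * |h' x| with hA
    set B := lam ^ ((1:ℝ)/4) * |h x| with hB
    have hA0 : 0 ≤ A := mul_nonneg hp.le (abs_nonneg _)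
    have hB0 : 0 ≤ B := mul_nonneg hq.le (abs_nonneg _)
    have hA2 : A^2 * s ≤ 14 * s := by
      have heq : A^2 * s = ((lam ^ (-(1:ℝ)/4))^2 * s) * (h' x)^2 := by
        rw [hA, mul_pow, sq_abs]; ring
      rw [heq, hpsq, one_mul]
      exact hd2
    have hA4 : A ≤ 4 := by
      have hA2' : A^2 ≤ 14 := le_of_mul_le_mul_right hA2 hs0
      nlinarith [hA0]
    have hB2 : B^2 ≤ 56/3 := by
      have : B^2 = s * (h x)^2 := by
        rw [hB, mul_pow, sq_abs, hqsq]
      rw [this]; exact hsh2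
    have hB5 : B ≤ 5 := by nlinarith [hB0]
    linarith
end

section
/- (Geometry of weights in the unique continuation argument) Let ε ≤ 1/40, τ > 0, and let h : [0,∞) → ℝ be C¹ with h(0)=0 and τ ≤ h′ ≤ (1+ε)τ, and suppose φ satisfies |φ(t,x) − (h(−ln t) − |x|²/(8t))| ≤ ε(τ + |x|²/t). Let (t₀,x₀) with 1/(16τ) ≤ t₀ ≤ 1/(8τ) and |x₀| = 1, and let (t,x) ∈ F^{int}_τ = [1/(32τ), 1/(16τ)]×B(0,1/4). Then φ(t,x) − φ(t₀,x₀) ≥ τ/2. -/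
/-- Geometry of weights in the unique continuation argument: with `ε ≤ 1/40`,
`τ ≤ h′ ≤ (1+ε)τ`, `h(0)=0`, and
`|φ(t,x) − (h(−ln t) − |x|²/(8t))| ≤ ε(τ + |x|²/t)`, for `(t₀,x₀)` with
`1/(16τ) ≤ t₀ ≤ 1/(8τ)`, `|x₀| = 1`, and `(t,x) ∈ [1/(32τ),1/(16τ)]×B(0,1/4)`,
one has `φ(t,x) − φ(t₀,x₀) ≥ τ/2`. -/
theorem stmt_17 {n : ℕ} (ε τ : ℝ) (hε0 : 0 ≤ ε) (hε : ε ≤ 1/40) (hτ : 0 < τ)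
    (h h' : ℝ → ℝ) (hh0 : h 0 = 0)
    (hder : ∀ s, HasDerivAt h (h' s) s)
    (hlb : ∀ s, τ ≤ h' s) (hub : ∀ s, h' s ≤ (1 + ε) * τ)
    (φ : ℝ → EuclideanSpace ℝ (Fin n) → ℝ)
    (hφ : ∀ (t : ℝ) (x : EuclideanSpace ℝ (Fin n)), 0 < t →
      |φ t x - (h (-Real.log t) - ‖x‖^2 / (8 * t))| ≤ ε * (τ + ‖x‖^2 / t))
    (t₀ t : ℝ) (x₀ x : EuclideanSpace ℝ (Fin n))
    (ht₀ : 1/(16 * τ) ≤ t₀) (ht₀' : t₀ ≤ 1/(8 * τ)) (hx₀ : ‖x₀‖ = 1)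
    (ht : 1/(32 * τ) ≤ t) (ht' : t ≤ 1/(16 * τ)) (hx : ‖x‖ ≤ 1/4) :
    τ/2 ≤ φ t x - φ t₀ x₀ := by

  have htpos : 0 < t := lt_of_lt_of_le (by positivity) ht
  have ht₀pos : 0 < t₀ := lt_of_lt_of_le (by positivity) ht₀
  -- clear denominators in the time bounds
  have htτ : 1 ≤ 32 * (τ * t) := by
    rw [div_le_iff₀ (by positivity)] at ht; nlinarith
  have ht'τ : 16 * (τ * t) ≤ 1 := by
    rw [le_div_iff₀ (by positivity)] at ht'; nlinarith
  have ht₀τ : 1 ≤ 16 * (τ * t₀) := by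
    rw [div_le_iff₀ (by positivity)] at ht₀; nlinarith
  have ht₀'τ : 8 * (τ * t₀) ≤ 1 := by
    rw [le_div_iff₀ (by positivity)] at ht₀'; nlinarith
  have hxsq : ‖x‖^2 ≤ 1/16 := by nlinarith [norm_nonneg x]
  -- monotonicity : h b - h a ≥ τ (b - a)
  have hmonog : Monotone (fun s => h s - τ * s) := by
    apply monotone_of_deriv_nonneg
    · intro s
      exact ((hder s).sub ((hasDerivAt_id s).const_mul τ)).differentiableAt
    · intro s
      have hd : HasDerivAt (fun s => h s - τ * s) (h' s - τ * 1) s :=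
        (hder s).sub ((hasDerivAt_id s).const_mul τ)
      rw [hd.deriv]
      have := hlb s; linarith
  have key : ∀ a b : ℝ, a ≤ b → τ * (b - a) ≤ h b - h a := by
    intro a b hab
    have := hmonog hab
    simp only at this
    linarith
  have htt₀ : t ≤ t₀ := le_trans ht' ht₀
  have hab : -Real.log t₀ ≤ -Real.log t := by
    have := Real.log_le_log htpos htt₀
    linarith
  have hmono := key (-Real.log t₀) (-Real.log t) hab
  -- log(16 τ t₀) ≤ (-log t) - (-log t₀)
  have hbd : Real.log (16 * τ * t₀) ≤ (-Real.log t) - (-Real.log t₀) := by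
    have h16 : Real.log (16 * τ * t₀) = Real.log (16 * τ) + Real.log t₀ :=
      Real.log_mul (by positivity) (ne_of_gt ht₀pos)
    have hlt : Real.log t ≤ Real.log (1 / (16 * τ)) := Real.log_le_log htpos ht'
    rw [one_div, Real.log_inv] at hlt
    linarith
  have hP : (0:ℝ) < 16 * τ * t₀ := by positivity
  have hlogP : 1 - 1 / (16 * τ * t₀) ≤ Real.log (16 * τ * t₀) := by
    have := Real.log_le_sub_one_of_pos (show (0:ℝ) < (16 * τ * t₀)⁻¹ by positivity)
    rw [Real.log_inv, one_div] at *
    linarith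
  have heqτ : τ * (1 / (16 * τ * t₀)) = 1 / (16 * t₀) := by
    field_simp
  have hchain : τ - 1 / (16 * t₀) ≤ h (-Real.log t) - h (-Real.log t₀) := by
    have h1 : τ * (1 - 1 / (16 * τ * t₀)) ≤ τ * Real.log (16 * τ * t₀) :=
      mul_le_mul_of_nonneg_left hlogP hτ.le
    have h2 : τ * Real.log (16 * τ * t₀) ≤ τ * ((-Real.log t) - (-Real.log t₀)) :=
      mul_le_mul_of_nonneg_left hbd hτ.le
    nlinarith
  -- φ bounds
  have HA := hφ t x htpos
  have HB := hφ t₀ x₀ ht₀pos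
  rw [abs_le] at HA HB
  rw [hx₀] at HB
  norm_num at HB
  -- numeric bounds on the various terms
  have hb1 : ‖x‖^2 / (8 * t) ≤ τ / 4 := by
    rw [div_le_iff₀ (by positivity)]; linarith [hxsq, htτ]
  have hb2 : ‖x‖^2 / t ≤ 2 * τ := by
    rw [div_le_iff₀ htpos]; linarith [hxsq, htτ]
  have hb3 : 1 / t₀ ≤ 16 * τ := by
    rw [div_le_iff₀ ht₀pos]; linarith [ht₀τ]
  have hb4 : τ / 2 ≤ 1 / (16 * t₀) := by
    rw [le_div_iff₀ (by positivity)]; linarith [ht₀'τ]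
  have hb5 : 1 / (8 * t₀) = 2 * (1 / (16 * t₀)) := by ring
  have e1 : ε * (τ + ‖x‖^2 / t) ≤ 3 * (ε * τ) := by
    have h := mul_le_mul_of_nonneg_left hb2 hε0
    have h2 : ε * (τ + ‖x‖^2 / t) = ε * τ + ε * (‖x‖^2 / t) := by ring
    linarith only [h, h2]
  have e2 : ε * (τ + 1 / t₀) ≤ 17 * (ε * τ) := by
    have h := mul_le_mul_of_nonneg_left hb3 hε0
    have h2 : ε * (τ + 1 / t₀) = ε * τ + ε * (1 / t₀) := by ring
    linarith only [h, h2]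
  have e3 : 20 * (ε * τ) ≤ τ / 2 := by
    have h := mul_le_mul_of_nonneg_right hε hτ.le
    linarith only [h, hτ]
  have hE : 1/(16*t₀) = t₀⁻¹/16 := by
    rw [one_div, mul_inv]; ring
  rw [hE] at hchain hb4
  rw [one_div] at e2
  linarith only [HA.1, HA.2, HB.1, HB.2, hchain, hb1, hb4, e1, e2, e3, hτ.le]
end
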